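/- arXiv:2409.04715 — 6 statements merged into one kernel-verified Lean document; each statement's English description precedes it below -/
import Mathlib

section
/- Let φ: L(t) → L(t') be a cluster morphism between seeds t = ({x_i}_{i∈I}, I_uf, B) and t' = ({y_j}_{j∈I'}, I'_uf, B'), with F = {i ∈ I : φ(x_i) = 1}. Then B'_{j,φ(i)} = 0 for every i ∈ I_uf∖F and every j ∈ I'∖φ(I∖F). -/
open scoped BigOperators

noncomputable section

/-- The Laurent polynomial ring `ℚ[x_i^{±1} : i ∈ I]`, realized as the group algebra
over `ℚ` of the free abelian group `I →₀ ℤ`. -/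
abbrev LaurentRing (I : Type*) : Type _ := AddMonoidAlgebra ℚ (I →₀ ℤ)

instance (I : Type*) : IsDomain (LaurentRing I) := NoZeroDivisors.to_isDomain _

/-- The Laurent variable `x_i`. -/
def Xv {I : Type*} (i : I) : LaurentRing I :=
  AddMonoidAlgebra.single (Finsupp.single i 1) 1

/-- The inverse Laurent variable `x_i⁻¹`. -/
def Xinv {I : Type*} (i : I) : LaurentRing I :=
  AddMonoidAlgebra.single (Finsupp.single i (-1)) 1

/-- A seed on the vertex set `I`: a set `uf` of unfrozen vertices together with an integer
exchange matrix `B` (rows indexed by `I`, columns meaningful only for `j ∈ uf`) whose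
principal part is skew-symmetric.  The cluster variables of the seed are the standard
generators `Xv i` of the Laurent polynomial ring `LaurentRing I`. -/
structure Seed (I : Type*) where
  uf : Set I
  B : I → I → ℤ
  skew : ∀ i ∈ uf, ∀ j ∈ uf, B i j = - B j i

open Classical in
/-- Mutation of the exchange matrix at the vertex `k`:
`(μ_k B)_{ij} = -b_{ij}` if `i = k` or `j = k`, and
`(μ_k B)_{ij} = b_{ij} + sgn(b_{ik}) * max (b_{ik} b_{kj}) 0` otherwise. -/
def mutB {I : Type*} (B : I → I → ℤ) (k : I) : I → I → ℤ := fun i j =>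
  if i = k ∨ j = k then - B i j
  else B i j + (B i k).sign * max (B i k * B k j) 0

/-- The one-step mutated cluster variable `μ_k(x)_k`, as an element of the Laurent ring:
`(∏_{j : b_{jk} > 0} x_j^{b_{jk}} + ∏_{j : b_{jk} < 0} x_j^{-b_{jk}}) / x_k`. -/
def exchVar {I : Type*} (B : I → I → ℤ) (k : I) : LaurentRing I :=
  ((∏ᶠ j : I, Xv j ^ (max (B j k) 0).toNat) +
    (∏ᶠ j : I, Xv j ^ (max (-(B j k)) 0).toNat)) * Xinv k

/-- A cluster morphism from the seed `t` to the seed `t'`: a ring homomorphism `hom`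
between the Laurent polynomial rings sending each cluster variable `x_i` either to `1`
(the set of such `i` being `F`) or to a cluster variable `y_{vmap i}`, such that the induced
vertex map is injective on `I ∖ F`, maps unfrozen vertices off `F` to unfrozen vertices,
intertwines the one-step mutated variables there, and satisfies the sign condition
`b_{ij} * b'_{vmap i, vmap j} ≥ 0` on unfrozen vertices off `F`. -/
structure ClusterMorphism {I I' : Type*} (t : Seed I) (t' : Seed I') where
  hom : LaurentRing I →+* LaurentRing I'
  vmap : I → I'
  hx : ∀ i : I, hom (Xv i) = 1 ∨ hom (Xv i) = Xv (vmap i)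
  vinj : ∀ i i' : I, hom (Xv i) ≠ 1 → hom (Xv i') ≠ 1 → vmap i = vmap i' → i = i'
  huf : ∀ i ∈ t.uf, hom (Xv i) ≠ 1 → vmap i ∈ t'.uf
  hmut : ∀ i ∈ t.uf, hom (Xv i) ≠ 1 → hom (exchVar t.B i) = exchVar t'.B (vmap i)
  hsign : ∀ i ∈ t.uf, ∀ j ∈ t.uf, hom (Xv i) ≠ 1 → hom (Xv j) ≠ 1 →
    0 ≤ t.B i j * t'.B (vmap i) (vmap j)

/-- For a cluster morphism `φ : L(t) → L(t')` with
`F = {i ∈ I : φ(x_i) = 1}`, one has `B'_{j, φ(i)} = 0` for every `i ∈ I_uf ∖ F` and every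
`j ∈ I' ∖ φ(I ∖ F)`. -/
theorem statement0 {I I' : Type*} [Finite I] [Finite I'] (t : Seed I) (t' : Seed I')
    (c : ClusterMorphism t t') (i : I) (hi : i ∈ t.uf) (hiF : c.hom (Xv i) ≠ 1)
    (j : I') (hj : ¬ ∃ i' : I, c.hom (Xv i') ≠ 1 ∧ c.vmap i' = j) :
    t'.B j (c.vmap i) = 0 := by
  classical
  set k := c.vmap i with hk
  have hkj : k ≠ j := fun h => hj ⟨i, hiF, hk ▸ h⟩
  -- the evaluation ring hom  x_{j'} ↦ 3^{δ_{j' j}}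
  set u : ℚˣ := Units.mk0 (3:ℚ) (by norm_num) with hu
  set ev : LaurentRing I' →+* ℚ :=
    ((AddMonoidAlgebra.lift ℚ ℚ (I' →₀ ℤ))
      ((Units.coeHom ℚ).comp ((zpowersHom ℚˣ u).comp
        (AddMonoidHom.toMultiplicative (Finsupp.applyAddHom j))))).toRingHom with hev
  have ev_single : ∀ (m : I' →₀ ℤ) (q : ℚ),
      ev (AddMonoidAlgebra.single m q) = q * ((u : ℚ) ^ (m j)) := by
    intro m q
    simp [hev, AddMonoidAlgebra.lift_single, zpowersHom, smul_eq_mul]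
  have ev_Xv : ∀ j' : I', ev (Xv j') = if j' = j then 3 else 1 := by
    intro j'
    rw [Xv, ev_single]
    rcases eq_or_ne j' j with h | h <;> simp [h, Finsupp.single_apply, hu]
  have huq : (u : ℚ) = 3 := by norm_num [hu]
  have ev_Xinv_k : ev (Xinv k) = 1 := by
    rw [Xinv, ev_single]
    simp [Finsupp.single_apply, hkj]
  -- ψ := ev ∘ hom kills every variable
  set ψ : LaurentRing I →+* ℚ := ev.comp c.hom with hψ
  have ψ_Xv : ∀ i' : I, ψ (Xv i') = 1 := by
    intro i'
    rcases c.hx i' with h | h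
    · simp [hψ, h]
    · by_cases h1 : c.hom (Xv i') = 1
      · simp [hψ, h1]
      · have : c.vmap i' ≠ j := fun hc => hj ⟨i', h1, hc⟩
        simp [hψ, h, ev_Xv, this]
  have ψ_Xinv : ∀ i' : I, ψ (Xinv i') = 1 := by
    intro i'
    have : ψ (Xv i' * Xinv i') = 1 := by
      rw [Xv, Xinv, AddMonoidAlgebra.single_mul_single]
      norm_num
      rw [← AddMonoidAlgebra.one_def, map_one]
    rw [map_mul, ψ_Xv] at this
    simpa using this
  -- evaluate LHS of hmut
  have hL : ψ (exchVar t.B i) = 2 := by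
    rw [exchVar, map_mul, map_add, ψ_Xinv]
    have hp : ∀ e : I → ℕ, ψ (∏ᶠ j' : I, Xv j' ^ e j') = 1 := by
      intro e
      have h := MonoidHom.map_finprod (f := fun j' : I => Xv j' ^ e j') ψ.toMonoidHom (Set.toFinite _)
      simp only [RingHom.toMonoidHom_eq_coe, MonoidHom.coe_coe] at h
      rw [h]
      simp [ψ_Xv]
    rw [hp, hp]; norm_num
  -- evaluate RHS of hmut
  have hprod : ∀ e : I' → ℕ, ev (∏ᶠ j' : I', Xv j' ^ e j') = 3 ^ e j := by
    intro e
    have h := MonoidHom.map_finprod (f := fun j' : I' => Xv j' ^ e j') ev.toMonoidHom (Set.toFinite _)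
    simp only [RingHom.toMonoidHom_eq_coe, MonoidHom.coe_coe] at h
    rw [h]
    have : ∀ j' : I', ev (Xv j' ^ e j') = (if j' = j then (3:ℚ) else 1) ^ e j' := by
      intro j'; rw [map_pow, ev_Xv]
    simp_rw [this]
    rw [finprod_eq_single _ j (by intro x hx; simp [hx])]
    simp
  have hR : ev (exchVar t'.B k) =
      3 ^ (max (t'.B j k) 0).toNat + 3 ^ (max (-(t'.B j k)) 0).toNat := by
    rw [exchVar, map_mul, map_add, ev_Xinv_k, hprod, hprod, mul_one]
  have key : (3:ℚ) ^ (max (t'.B j k) 0).toNat + 3 ^ (max (-(t'.B j k)) 0).toNat = 2 := by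
    have := c.hmut i hi hiF
    have h2 : ψ (exchVar t.B i) = ev (exchVar t'.B k) := by
      rw [hψ]; simp [RingHom.comp_apply, this, hk]
    rw [hL, hR] at h2
    linarith [h2]
  -- finish: both powers ≥ 1, sum = 2 ⇒ each = 1 ⇒ exponents = 0
  set a := (max (t'.B j k) 0).toNat with ha
  set b := (max (-(t'.B j k)) 0).toNat with hb
  have h1a : (1:ℚ) ≤ 3 ^ a := one_le_pow₀ (by norm_num)
  have h1b : (1:ℚ) ≤ 3 ^ b := one_le_pow₀ (by norm_num)
  have hea : (3:ℚ) ^ a = 1 := by linarith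
  have heb : (3:ℚ) ^ b = 1 := by linarith
  have ha0 : a = 0 := by
    by_contra h
    have : (3:ℚ) ≤ 3 ^ a := le_self_pow₀ (by norm_num) h
    linarith
  have hb0 : b = 0 := by
    by_contra h
    have : (3:ℚ) ≤ 3 ^ b := le_self_pow₀ (by norm_num) h
    linarith
  rw [ha, Int.toNat_eq_zero] at ha0
  rw [hb, Int.toNat_eq_zero] at hb0
  omega


end
end

section
/- Let φ: L(t) → L(t') be a cluster morphism between seeds t = ({x_i}_{i∈I}, I_uf, B) and t' = ({y_j}_{j∈I'}, I'_uf, B'), with F = {i ∈ I : φ(x_i) = 1}. For any finite sequence 𝐢 = (i_1, …, i_n) of vertices of I_uf∖F and for every i ∈ I∖F, one has φ(μ_𝐢(x)_i) = μ_{φ(𝐢)}(y)_{φ(i)}, where μ_𝐢(x)_i denotes the i-th cluster variable of the iterated mutation μ_{i_n}(⋯μ_{i_1}(t)⋯) and μ_{φ(𝐢)}(y)_{φ(i)} denotes the φ(i)-th cluster variable of μ_{φ(i_n)}(⋯μ_{φ(i_1)}(t')⋯). In other words, φ intertwines arbitrary mutation sequences supported on vertices where it is defined. -/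
open scoped BigOperators

noncomputable section

/-- The fraction field of the Laurent polynomial ring, where iterated mutated cluster
variables live. -/
abbrev LField (I : Type*) : Type _ := FractionRing (LaurentRing I)

open Classical in
/-- Mutation of a cluster at the vertex `k`, inside an ambient field:
`μ_k(x)_k = (∏_{j : b_{jk} > 0} x_j^{b_{jk}} + ∏_{j : b_{jk} < 0} x_j^{-b_{jk}}) / x_k`
and `μ_k(x)_i = x_i` for `i ≠ k`. -/
def mutX {I K : Type*} [Field K] (B : I → I → ℤ) (k : I) (x : I → K) : I → K := fun i =>
  if i = k then
    ((∏ᶠ j : I, x j ^ max (B j k) 0) + (∏ᶠ j : I, x j ^ max (-(B j k)) 0)) / x k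
  else x i

/-- Iterated mutation of a pair (exchange matrix, cluster) along a list of vertices;
the head of the list is mutated first. -/
def mutSeq {I K : Type*} [Field K] (l : List I) (p : (I → I → ℤ) × (I → K)) :
    (I → I → ℤ) × (I → K) :=
  l.foldl (fun q k => (mutB q.1 k, mutX q.1 k q.2)) p

/-- The initial cluster of a seed pattern, viewed inside the fraction field. -/
def xGen (I : Type*) : I → LField I := fun i => algebraMap (LaurentRing I) (LField I) (Xv i)

/-- `z` is a cluster variable of the mutation pattern with initial data `(uf, B₀, x₀)`:
it occurs in the cluster of a seed obtained from the initial one by a finite sequence of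
mutations at unfrozen vertices. -/
def IsClusterVariable {J K : Type*} [Field K] (uf : Set J) (B₀ : J → J → ℤ) (x₀ : J → K)
    (z : K) : Prop :=
  ∃ l : List J, (∀ k ∈ l, k ∈ uf) ∧ ∃ j : J, z = (mutSeq l (B₀, x₀)).2 j

/-- `m` is a cluster monomial of the mutation pattern with initial data `(uf, B₀, x₀)`:
a product of cluster variables all belonging to a single seed obtained from the initial one
by a finite sequence of mutations at unfrozen vertices. -/
def IsClusterMonomial {J K : Type*} [Field K] (uf : Set J) (B₀ : J → J → ℤ) (x₀ : J → K)
    (m : K) : Prop :=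
  ∃ l : List J, (∀ k ∈ l, k ∈ uf) ∧
    ∃ a : J → ℕ, m = ∏ᶠ j : J, (mutSeq l (B₀, x₀)).2 j ^ a j

/-- The cluster algebra of the pattern with initial data `(uf, B₀, x₀)`: the `ℚ`-subalgebra
of the ambient field generated by all cluster variables. -/
def clusterAlgebra {J K : Type*} [Field K] [Algebra ℚ K] (uf : Set J) (B₀ : J → J → ℤ)
    (x₀ : J → K) : Subalgebra ℚ K :=
  Algebra.adjoin ℚ {z | IsClusterVariable uf B₀ x₀ z}

-- ### helpers on sums of two singles
lemma S2single_inj {G : Type*} {u v : G} (h : Finsupp.single u (1:ℚ) = Finsupp.single v 1) : u = v :=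
  Finsupp.single_left_injective one_ne_zero h

lemma S2two_single_aux {G : Type*} {u v u' v' : G}
    (h : Finsupp.single u (1:ℚ) + Finsupp.single v 1 = Finsupp.single u' 1 + Finsupp.single v' 1)
    (h1 : u ≠ u') : v' = u := by
  classical
  by_contra hc
  have key := DFunLike.congr_fun h u
  rw [Finsupp.add_apply, Finsupp.add_apply, Finsupp.single_apply, Finsupp.single_apply,
    Finsupp.single_apply, Finsupp.single_apply] at key
  split_ifs at key <;> simp_all

lemma S2two_single_eq {G : Type*} {u v u' v' : G}
    (h : Finsupp.single u (1:ℚ) + Finsupp.single v 1 = Finsupp.single u' 1 + Finsupp.single v' 1) :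
    (u = u' ∧ v = v') ∨ (u = v' ∧ v = u') := by
  classical
  by_cases h1 : u = u'
  · subst h1
    exact Or.inl ⟨rfl, S2single_inj (add_left_cancel h)⟩
  · exact Or.inr ⟨(S2two_single_aux h h1).symm, S2two_single_aux h.symm (fun hh => h1 hh.symm)⟩

-- ### monomials
lemma S2mono_mul {I : Type*} (u v : I →₀ ℤ) :
    AddMonoidAlgebra.single u (1:ℚ) * AddMonoidAlgebra.single v 1 = AddMonoidAlgebra.single (u+v) 1 := by
  rw [AddMonoidAlgebra.single_mul_single, one_mul]

lemma S2mono_ne_zero {I : Type*} (u : I →₀ ℤ) : AddMonoidAlgebra.single u (1:ℚ) ≠ 0 := by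
  simp [AddMonoidAlgebra.single_eq_zero]

lemma S2Xv_ne_zero {I : Type*} (i : I) : Xv i ≠ 0 := S2mono_ne_zero _

lemma S2Xv_pow {I : Type*} (i : I) (n : ℕ) :
    Xv i ^ n = AddMonoidAlgebra.single (Finsupp.single i (n:ℤ)) (1:ℚ) := by
  rw [Xv, AddMonoidAlgebra.single_pow, one_pow, Finsupp.smul_single]
  norm_num

lemma S2prod_mono {I J : Type*} (s : Finset J) (w : J → (I →₀ ℤ)) :
    (∏ j ∈ s, AddMonoidAlgebra.single (w j) (1:ℚ)) = AddMonoidAlgebra.single (∑ j ∈ s, w j) 1 := by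
  classical
  induction s using Finset.cons_induction with
  | empty => simp [AddMonoidAlgebra.one_def]
  | cons a s ha ih => rw [Finset.prod_cons, Finset.sum_cons, ih, S2mono_mul]

lemma S2Xv_mul_Xinv {I : Type*} (i : I) : Xv i * Xinv i = 1 := by
  rw [Xv, Xinv, AddMonoidAlgebra.single_mul_single, one_mul, ← Finsupp.single_add]
  simp [AddMonoidAlgebra.one_def]

-- ### evaluation at 1
def S2E (I : Type*) : LaurentRing I →+* ℝ :=
  ((AddMonoidAlgebra.lift ℚ ℝ (I →₀ ℤ)) 1).toRingHom

lemma S2E_single {I : Type*} (u : I →₀ ℤ) : S2E I (AddMonoidAlgebra.single u (1:ℚ)) = 1 := by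
  simp [S2E, AddMonoidAlgebra.lift_single]

lemma S2E_Xv {I : Type*} (i : I) : S2E I (Xv i) = 1 := S2E_single _

-- ### the relation
def S2Rel {I K' : Type*} [Field K'] (χ : LaurentRing I →+* K') (x : LField I) (z : K') : Prop :=
  ∃ a b : LaurentRing I, b ≠ 0 ∧ χ b ≠ 0 ∧
    x = algebraMap (LaurentRing I) (LField I) a / algebraMap (LaurentRing I) (LField I) b ∧
    z = χ a / χ b

section RelLemmas
variable {I K' : Type*} [Field K'] {χ : LaurentRing I →+* K'}

lemma S2map_ne_zero {a : LaurentRing I} (h : a ≠ 0) :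
    algebraMap (LaurentRing I) (LField I) a ≠ 0 := fun h0 =>
  h (IsFractionRing.to_map_eq_zero_iff.mp h0)

lemma S2rel_map (a : LaurentRing I) : S2Rel χ (algebraMap (LaurentRing I) (LField I) a) (χ a) :=
  ⟨a, 1, one_ne_zero, by simp, by simp, by simp⟩

lemma S2rel_one : S2Rel χ 1 1 := by simpa using S2rel_map (χ := χ) 1

lemma S2rel_mul {x x' z z'} (h : S2Rel χ x z) (h' : S2Rel χ x' z') : S2Rel χ (x * x') (z * z') := by
  obtain ⟨a, b, hb, hχb, hx, hz⟩ := h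
  obtain ⟨a', b', hb', hχb', hx', hz'⟩ := h'
  exact ⟨a * a', b * b', mul_ne_zero hb hb', by rw [map_mul]; exact mul_ne_zero hχb hχb',
    by rw [hx, hx', map_mul, map_mul, div_mul_div_comm],
    by rw [hz, hz', map_mul, map_mul, div_mul_div_comm]⟩

lemma S2rel_add {x x' z z'} (h : S2Rel χ x z) (h' : S2Rel χ x' z') : S2Rel χ (x + x') (z + z') := by
  obtain ⟨a, b, hb, hχb, hx, hz⟩ := h
  obtain ⟨a', b', hb', hχb', hx', hz'⟩ := h'
  have hib := S2map_ne_zero hb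
  have hib' := S2map_ne_zero hb'
  refine ⟨a * b' + a' * b, b * b', mul_ne_zero hb hb',
    by rw [map_mul]; exact mul_ne_zero hχb hχb', ?_, ?_⟩
  · rw [hx, hx', div_add_div _ _ hib hib', map_add, map_mul, map_mul, map_mul]
    ring
  · rw [hz, hz', div_add_div _ _ hχb hχb', map_add, map_mul, map_mul, map_mul]
    ring

lemma S2rel_pow {x z} (h : S2Rel χ x z) (n : ℕ) : S2Rel χ (x ^ n) (z ^ n) := by
  induction n with
  | zero => simpa using S2rel_one
  | succ n ih => rw [pow_succ, pow_succ]; exact S2rel_mul ih h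

lemma S2rel_ne_zero {x z} (h : S2Rel χ x z) (hz : z ≠ 0) : x ≠ 0 := by
  obtain ⟨a, b, hb, hχb, hx, hzz⟩ := h
  have ha : a ≠ 0 := by
    rintro rfl; exact hz (by simp [hzz])
  rw [hx]
  exact div_ne_zero (S2map_ne_zero ha) (S2map_ne_zero hb)

lemma S2rel_inv {x z} (h : S2Rel χ x z) (hz : z ≠ 0) : S2Rel χ x⁻¹ z⁻¹ := by
  obtain ⟨a, b, hb, hχb, hx, hzz⟩ := h
  have hχa : χ a ≠ 0 := by
    rintro h0; exact hz (by simp [hzz, h0])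
  have ha : a ≠ 0 := fun h0 => hχa (by simp [h0])
  exact ⟨b, a, ha, hχa, by rw [hx, inv_div], by rw [hzz, inv_div]⟩

lemma S2rel_div {x x' z z'} (h : S2Rel χ x z) (h' : S2Rel χ x' z') (hz' : z' ≠ 0) :
    S2Rel χ (x / x') (z / z') := by
  rw [div_eq_mul_inv, div_eq_mul_inv]
  exact S2rel_mul h (S2rel_inv h' hz')

lemma S2rel_prod {J : Type*} (s : Finset J) (f : J → LField I) (g : J → K')
    (h : ∀ j ∈ s, S2Rel χ (f j) (g j)) : S2Rel χ (∏ j ∈ s, f j) (∏ j ∈ s, g j) := by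
  classical
  induction s using Finset.cons_induction with
  | empty => simpa using S2rel_one
  | cons a s ha ih =>
    rw [Finset.prod_cons, Finset.prod_cons]
    exact S2rel_mul (h a (Finset.mem_cons_self a s)) (ih fun j hj => h j (Finset.mem_cons_of_mem hj))

end RelLemmas

-- ### mutX lemmas
lemma S2zpow_max {K : Type*} [Field K] (x : K) (e : ℤ) :
    x ^ max e 0 = x ^ (max e 0).toNat := by
  rw [← zpow_natCast, Int.toNat_of_nonneg (le_max_right _ _)]

lemma S2mutX_self {J K : Type*} [Fintype J] [Field K] (B : J → J → ℤ) (k : J) (x : J → K) :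
    mutX B k x k = ((∏ j, x j ^ (max (B j k) 0).toNat) +
      ∏ j, x j ^ (max (-(B j k)) 0).toNat) / x k := by
  rw [mutX, if_pos rfl]
  congr 1
  congr 1 <;> rw [finprod_eq_prod_of_fintype] <;> exact Finset.prod_congr rfl fun j _ => S2zpow_max _ _

lemma S2mutX_ne {J K : Type*} [Field K] (B : J → J → ℤ) (k : J) (x : J → K) {i : J}
    (h : i ≠ k) : mutX B k x i = x i := by
  rw [mutX, if_neg h]

lemma S2mutSeq_cons {J K : Type*} [Field K] (k : J) (l : List J) (p : (J → J → ℤ) × (J → K)) :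
    mutSeq (k :: l) p = mutSeq l (mutB p.1 k, mutX p.1 k p.2) := rfl

-- ### sign helper
lemma S2sign_max (a b : ℤ) : a.sign * max (a * b) 0 = b.sign * max (a * b) 0 := by
  rcases lt_trichotomy (a * b) 0 with h | h | h
  · rw [max_eq_right h.le]; ring
  · rw [← h, max_self]
    rcases mul_eq_zero.mp h with h0 | h0 <;> simp [h0]
  · rcases mul_pos_iff.mp h with ⟨ha, hb⟩ | ⟨ha, hb⟩
    · rw [Int.sign_eq_one_of_pos ha, Int.sign_eq_one_of_pos hb]
    · rw [Int.sign_eq_neg_one_of_neg ha, Int.sign_eq_neg_one_of_neg hb]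

lemma S2mutB_skew {J : Type*} {uf : Set J} {B : J → J → ℤ}
    (hskew : ∀ i ∈ uf, ∀ j ∈ uf, B i j = - B j i) {k : J} (hk : k ∈ uf) :
    ∀ i ∈ uf, ∀ j ∈ uf, mutB B k i j = - mutB B k j i := by
  intro i hi j hj
  unfold mutB
  by_cases hc : i = k ∨ j = k
  · rw [if_pos hc, if_pos (Or.symm hc)]
    have := hskew i hi j hj
    omega
  · rw [if_neg hc, if_neg (fun hh => hc (Or.symm hh))]
    have h1 : B j i = - B i j := hskew j hj i hi
    have h2 : B j k = - B k j := hskew j hj k hk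
    have h3 : B k i = - B i k := hskew k hk i hi
    have h4 : (B j k).sign * max (B j k * B k i) 0 = - ((B i k).sign * max (B i k * B k j) 0) := by
      rw [h2, h3, Int.sign_neg, neg_mul_neg, neg_mul, S2sign_max (B k j) (B i k),
        mul_comm (B k j) (B i k)]
    rw [h1, h4]
    ring

-- ### the induced map χφ
def S2chi {I I' : Type*} {t : Seed I} {t' : Seed I'} (c : ClusterMorphism t t') :
    LaurentRing I →+* LField I' :=
  (algebraMap (LaurentRing I') (LField I')).comp c.hom

lemma S2chi_Xv_of_ne {I I' : Type*} {t : Seed I} {t' : Seed I'} (c : ClusterMorphism t t')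
    {j : I} (hj : c.hom (Xv j) ≠ 1) :
    S2chi c (Xv j) = algebraMap (LaurentRing I') (LField I') (Xv (c.vmap j)) := by
  rcases c.hx j with h | h
  · exact absurd h hj
  · rw [S2chi, RingHom.comp_apply, h]

lemma S2chi_Xv_of_eq {I I' : Type*} {t : Seed I} {t' : Seed I'} (c : ClusterMorphism t t')
    {j : I} (hj : c.hom (Xv j) = 1) : S2chi c (Xv j) = 1 := by
  rw [S2chi, RingHom.comp_apply, hj, map_one]

-- ### product matching
lemma S2matchProd {I I' : Type*} [Fintype I] [Fintype I'] {t : Seed I} {t' : Seed I'}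
    (c : ClusterMorphism t t') (x : I → LField I) (y : I' → LField I')
    (hrel : ∀ j, c.hom (Xv j) ≠ 1 → S2Rel (S2chi c) (x j) (y (c.vmap j)))
    (hfro : ∀ j, c.hom (Xv j) = 1 → x j = xGen I j)
    (e : I → ℤ) (e' : I' → ℤ)
    (he : ∀ j, c.hom (Xv j) ≠ 1 → e' (c.vmap j) = e j)
    (he' : ∀ j', (∀ j, c.hom (Xv j) ≠ 1 → c.vmap j ≠ j') → e' j' = 0) :
    S2Rel (S2chi c) (∏ j, x j ^ (max (e j) 0).toNat) (∏ j', y j' ^ (max (e' j') 0).toNat) := by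
  classical
  set S : Finset I := Finset.univ.filter (fun j => c.hom (Xv j) ≠ 1) with hS
  have hmemS : ∀ j, j ∈ S ↔ c.hom (Xv j) ≠ 1 := by
    intro j; simp [hS]
  have step1 : S2Rel (S2chi c) (∏ j, x j ^ (max (e j) 0).toNat)
      (∏ j, if j ∈ S then y (c.vmap j) ^ (max (e j) 0).toNat else 1) := by
    refine S2rel_prod _ _ _ fun j _ => ?_
    by_cases hj : c.hom (Xv j) ≠ 1
    · rw [if_pos ((hmemS j).mpr hj)]
      exact S2rel_pow (hrel j hj) _
    · push_neg at hj
      rw [if_neg (fun hh => (hmemS j).mp hh hj), hfro j hj]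
      have h1 : S2Rel (S2chi c) (xGen I j) 1 := by
        have := S2rel_map (χ := S2chi c) (Xv j)
        rwa [S2chi_Xv_of_eq c hj] at this
      simpa using S2rel_pow h1 ((max (e j) 0).toNat)
  have step2 : (∏ j, if j ∈ S then y (c.vmap j) ^ (max (e j) 0).toNat else 1)
      = ∏ j ∈ S, y (c.vmap j) ^ (max (e j) 0).toNat := by
    rw [Finset.prod_ite_mem, Finset.univ_inter]
  have step3 : (∏ j', y j' ^ (max (e' j') 0).toNat)
      = ∏ j ∈ S, y (c.vmap j) ^ (max (e j) 0).toNat := by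
    have himg : (∏ j' ∈ S.image c.vmap, y j' ^ (max (e' j') 0).toNat)
        = ∏ j', y j' ^ (max (e' j') 0).toNat := by
      refine Finset.prod_subset (Finset.subset_univ _) ?_
      intro j' _ hj'
      have h0 : e' j' = 0 := by
        refine he' j' fun j hj heq => hj' ?_
        exact Finset.mem_image.mpr ⟨j, (hmemS j).mpr hj, heq⟩
      simp [h0]
    rw [← himg, Finset.prod_image]
    · refine Finset.prod_congr rfl fun j hj => ?_
      rw [he j ((hmemS j).mp hj)]
    · intro j hj j2 hj2 heq
      exact c.vinj j j2 ((hmemS j).mp hj) ((hmemS j2).mp hj2) heq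
  rw [step3]
  rwa [step2] at step1

-- ### the invariant
structure S2Inv {I I' : Type*} (t : Seed I) (t' : Seed I') (c : ClusterMorphism t t')
    (B : I → I → ℤ) (x : I → LField I) (B' : I' → I' → ℤ) (y : I' → LField I')
    (r : I → ℝ) (r' : I' → ℝ) : Prop where
  skew : ∀ i ∈ t.uf, ∀ j ∈ t.uf, B i j = - B j i
  relphi : ∀ j, c.hom (Xv j) ≠ 1 → S2Rel (S2chi c) (x j) (y (c.vmap j))
  frozen : ∀ j, c.hom (Xv j) = 1 → x j = xGen I j
  colInv : ∀ k ∈ t.uf, c.hom (Xv k) ≠ 1 → ∃ ε : ℤ, (ε = 1 ∨ ε = -1) ∧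
    (∀ j, c.hom (Xv j) ≠ 1 → B' (c.vmap j) (c.vmap k) = ε * B j k) ∧
    (∀ j', (∀ j, c.hom (Xv j) ≠ 1 → c.vmap j ≠ j') → B' j' (c.vmap k) = 0) ∧
    (ε = -1 → ∀ j ∈ t.uf, c.hom (Xv j) ≠ 1 → B j k = 0)
  relE : ∀ j, S2Rel (S2E I) (x j) (r j)
  relE' : ∀ j', S2Rel (S2E I') (y j') (r' j')
  rpos : ∀ j, 0 < r j
  rpos' : ∀ j', 0 < r' j'

section Step
variable {I I' : Type*} [Fintype I] [Fintype I'] {t : Seed I} {t' : Seed I'}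
  {c : ClusterMorphism t t'} {B : I → I → ℤ} {x : I → LField I} {B' : I' → I' → ℤ}
  {y : I' → LField I'} {r : I → ℝ} {r' : I' → ℝ}

lemma S2Inv.step (h : S2Inv t t' c B x B' y r r') {k : I} (hk : k ∈ t.uf)
    (hkF : c.hom (Xv k) ≠ 1) :
    S2Inv t t' c (mutB B k) (mutX B k x) (mutB B' (c.vmap k)) (mutX B' (c.vmap k) y)
      (mutX B k r) (mutX B' (c.vmap k) r') := by
  classical
  have hrne : ∀ j, r j ≠ 0 := fun j => (h.rpos j).ne'
  have hrne' : ∀ j', r' j' ≠ 0 := fun j' => (h.rpos' j').ne'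
  have hyne : ∀ j', y j' ≠ 0 := fun j' => S2rel_ne_zero (h.relE' j') (hrne' j')
  have hvne : ∀ j, c.hom (Xv j) ≠ 1 → j ≠ k → c.vmap j ≠ c.vmap k :=
    fun j hj hjk heq => hjk (c.vinj j k hj hkF heq)
  refine ⟨S2mutB_skew h.skew hk, ?_, ?_, ?_, ?_, ?_, ?_, ?_⟩
  · -- relphi
    intro j hj
    by_cases hjk : j = k
    · subst hjk
      rw [S2mutX_self, S2mutX_self]
      obtain ⟨ε, hε, ha, hb, hz⟩ := h.colInv j hk hj
      have relP : S2Rel (S2chi c)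
          ((∏ i, x i ^ (max (B i j) 0).toNat) + ∏ i, x i ^ (max (-(B i j)) 0).toNat)
          ((∏ i', y i' ^ (max (B' i' (c.vmap j)) 0).toNat) +
            ∏ i', y i' ^ (max (-(B' i' (c.vmap j))) 0).toNat) := by
        rcases hε with hε | hε
        · subst hε
          refine S2rel_add (S2matchProd c x y h.relphi h.frozen _ _ ?_ ?_)
            (S2matchProd c x y h.relphi h.frozen _ _ ?_ ?_)
          · intro i hi; simp [ha i hi]
          · intro i' hi'; simp [hb i' hi']
          · intro i hi; simp [ha i hi]
          · intro i' hi'; simp [hb i' hi']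
        · subst hε
          have h1 := S2matchProd c x y h.relphi h.frozen (fun i => B i j)
            (fun i' => -(B' i' (c.vmap j))) (fun i hi => by simp [ha i hi])
            (fun i' hi' => by simp [hb i' hi'])
          have h2 := S2matchProd c x y h.relphi h.frozen (fun i => -(B i j))
            (fun i' => B' i' (c.vmap j)) (fun i hi => by simp [ha i hi])
            (fun i' hi' => by simp [hb i' hi'])
          have := S2rel_add h1 h2
          rwa [add_comm ((∏ i', y i' ^ (max (-(B' i' (c.vmap j))) 0).toNat))] at this
      exact S2rel_div relP (h.relphi j hj) (hyne _)
    · rw [S2mutX_ne _ _ _ hjk, S2mutX_ne _ _ _ (hvne j hj hjk)]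
      exact h.relphi j hj
  · -- frozen
    intro j hj
    rw [S2mutX_ne _ _ _ (fun hh => hkF (by rw [← hh]; exact hj)), h.frozen j hj]
  · -- colInv
    intro k₂ hk₂ hk₂F
    obtain ⟨ε₀, hε₀, ha₀, hb₀, hz₀⟩ := h.colInv k hk hkF
    obtain ⟨ε₂, hε₂, ha₂, hb₂, hz₂⟩ := h.colInv k₂ hk₂ hk₂F
    have hkk₂ : (ε₀ = -1 ∨ ε₂ = -1) → B k k₂ = 0 := by
      rintro (hε | hε)
      · have h1 : B k₂ k = 0 := hz₀ hε k₂ hk₂ hk₂F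
        have := h.skew k hk k₂ hk₂
        omega
      · exact hz₂ hε k hk hkF
    refine ⟨ε₂, hε₂, ?_, ?_, ?_⟩
    · intro j hj
      have hcond : (c.vmap j = c.vmap k ∨ c.vmap k₂ = c.vmap k) ↔ (j = k ∨ k₂ = k) := by
        constructor
        · rintro (hh | hh)
          · exact Or.inl (c.vinj j k hj hkF hh)
          · exact Or.inr (c.vinj k₂ k hk₂F hkF hh)
        · rintro (hh | hh)
          · exact Or.inl (by rw [hh])
          · exact Or.inr (by rw [hh])
      unfold mutB
      by_cases hc : j = k ∨ k₂ = k
      · rw [if_pos (hcond.mpr hc), if_pos hc, ha₂ j hj]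
        ring
      · rw [if_neg (fun hh => hc (hcond.mp hh)), if_neg hc, ha₂ j hj, ha₀ j hj, ha₂ k hkF]
        rcases hε₀ with h0 | h0 <;> rcases hε₂ with h2 | h2 <;> subst h0 <;> subst h2
        · simp
        · have hB0 := hkk₂ (Or.inr rfl); rw [hB0]; simp
        · have hB0 := hkk₂ (Or.inl rfl); rw [hB0]; simp
        · have hB0 := hkk₂ (Or.inl rfl); rw [hB0]; simp
    · intro j' hj'
      have hj'k : j' ≠ c.vmap k := fun hh => hj' k hkF hh.symm
      unfold mutB
      by_cases hc : k₂ = k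
      · rw [if_pos (Or.inr (by rw [hc]))]
        have h0 : B' j' (c.vmap k₂) = 0 := by rw [hc]; exact hb₀ j' hj'
        omega
      · rw [if_neg (by
          rintro (hh | hh)
          · exact hj'k hh
          · exact hc (c.vinj k₂ k hk₂F hkF hh)), hb₂ j' hj', hb₀ j' hj']
        simp
    · intro hε2 j hj hjF
      have h1 : B j k₂ = 0 := hz₂ hε2 j hj hjF
      have h2 : B k k₂ = 0 := hkk₂ (Or.inr hε2)
      unfold mutB
      by_cases hc : j = k ∨ k₂ = k
      · rw [if_pos hc]; omega
      · rw [if_neg hc, h1, h2]; simp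
  · -- relE
    intro j
    by_cases hjk : j = k
    · subst hjk
      rw [S2mutX_self, S2mutX_self]
      refine S2rel_div (S2rel_add ?_ ?_) (h.relE j) (hrne j) <;>
        exact S2rel_prod _ _ _ fun i _ => S2rel_pow (h.relE i) _
    · rw [S2mutX_ne _ _ _ hjk, S2mutX_ne _ _ _ hjk]
      exact h.relE j
  · -- relE'
    intro j'
    by_cases hjk : j' = c.vmap k
    · rw [hjk, S2mutX_self, S2mutX_self]
      refine S2rel_div (S2rel_add ?_ ?_) (h.relE' (c.vmap k)) (hrne' (c.vmap k)) <;>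
        exact S2rel_prod _ _ _ fun i _ => S2rel_pow (h.relE' i) _
    · rw [S2mutX_ne _ _ _ hjk, S2mutX_ne _ _ _ hjk]
      exact h.relE' j'
  · -- rpos
    intro j
    by_cases hjk : j = k
    · subst hjk
      rw [S2mutX_self]
      refine div_pos (add_pos ?_ ?_) (h.rpos j) <;>
        exact Finset.prod_pos fun i _ => pow_pos (h.rpos i) _
    · rw [S2mutX_ne _ _ _ hjk]; exact h.rpos j
  · -- rpos'
    intro j'
    by_cases hjk : j' = c.vmap k
    · rw [hjk, S2mutX_self]
      refine div_pos (add_pos ?_ ?_) (h.rpos' (c.vmap k)) <;>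
        exact Finset.prod_pos fun i _ => pow_pos (h.rpos' i) _
    · rw [S2mutX_ne _ _ _ hjk]; exact h.rpos' j'

end Step

-- ### base case
lemma S2prod_Xv_pow {J : Type*} [Fintype J] (e : J → ℤ) :
    (∏ j, Xv j ^ (max (e j) 0).toNat)
      = AddMonoidAlgebra.single (∑ j, Finsupp.single j (max (e j) 0)) (1:ℚ) := by
  rw [← S2prod_mono]
  refine Finset.prod_congr rfl fun j _ => ?_
  rw [S2Xv_pow, Int.toNat_of_nonneg (le_max_right _ _)]

lemma S2exch_mono {J : Type*} [Fintype J] (B : J → J → ℤ) (k : J) :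
    exchVar B k = (AddMonoidAlgebra.single (∑ j, Finsupp.single j (max (B j k) 0)) (1:ℚ)
      + AddMonoidAlgebra.single (∑ j, Finsupp.single j (max (-(B j k)) 0)) 1) * Xinv k := by
  rw [exchVar, finprod_eq_prod_of_fintype, finprod_eq_prod_of_fintype,
    S2prod_Xv_pow, S2prod_Xv_pow]

section Base
variable {I I' : Type*} {t : Seed I} {t' : Seed I'}

lemma S2hom_Xinv (c : ClusterMorphism t t') {k : I} (hk : c.hom (Xv k) ≠ 1) :
    c.hom (Xinv k) = Xinv (c.vmap k) := by
  have h2 := congrArg c.hom (S2Xv_mul_Xinv k)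
  rcases c.hx k with hx | hx
  · exact absurd hx hk
  rw [map_mul, map_one, hx] at h2
  exact mul_left_cancel₀ (S2Xv_ne_zero _) (h2.trans (S2Xv_mul_Xinv (c.vmap k)).symm)

open Classical in
lemma S2hom_prod_Xv_pow [Fintype I] (c : ClusterMorphism t t') (e : I → ℤ) :
    c.hom (∏ j, Xv j ^ (max (e j) 0).toNat)
      = AddMonoidAlgebra.single (∑ j ∈ Finset.univ.filter (fun j => c.hom (Xv j) ≠ 1),
          Finsupp.single (c.vmap j) (max (e j) 0)) (1:ℚ) := by
  classical
  rw [map_prod]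
  have key : ∀ j : I, c.hom (Xv j ^ (max (e j) 0).toNat)
      = AddMonoidAlgebra.single
          (if c.hom (Xv j) ≠ 1 then Finsupp.single (c.vmap j) (max (e j) 0) else 0) (1:ℚ) := by
    intro j
    by_cases h1 : c.hom (Xv j) = 1
    · rw [if_neg (not_not_intro h1), map_pow, h1, one_pow, AddMonoidAlgebra.one_def]
    · rcases c.hx j with hx | hx
      · exact absurd hx h1
      rw [if_pos h1, map_pow, hx, S2Xv_pow, Int.toNat_of_nonneg (le_max_right _ _)]
  rw [Finset.prod_congr rfl (fun j _ => key j), S2prod_mono, ← Finset.sum_filter]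

lemma S2sum_single_apply_mem {J J' : Type*} (s : Finset J) (σ : J → J') (g : J → ℤ)
    (hinj : ∀ a ∈ s, ∀ b ∈ s, σ a = σ b → a = b) {j₀ : J} (hj₀ : j₀ ∈ s) :
    (∑ j ∈ s, Finsupp.single (σ j) (g j)) (σ j₀) = g j₀ := by
  classical
  rw [Finsupp.finset_sum_apply]
  rw [Finset.sum_eq_single j₀ (fun b hb hne => by
    rw [Finsupp.single_apply, if_neg (fun hh => hne (hinj b hb j₀ hj₀ hh))])
    (fun hh => absurd hj₀ hh)]
  rw [Finsupp.single_apply, if_pos rfl]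

lemma S2sum_single_apply_not {J J' : Type*} (s : Finset J) (σ : J → J') (g : J → ℤ)
    {j' : J'} (hj' : ∀ j ∈ s, σ j ≠ j') :
    (∑ j ∈ s, Finsupp.single (σ j) (g j)) j' = 0 := by
  classical
  rw [Finsupp.finset_sum_apply]
  exact Finset.sum_eq_zero fun b hb => by
    rw [Finsupp.single_apply, if_neg (hj' b hb)]

open Classical in
lemma S2base_colInv [Fintype I] [Fintype I'] (c : ClusterMorphism t t') :
    ∀ k ∈ t.uf, c.hom (Xv k) ≠ 1 → ∃ ε : ℤ, (ε = 1 ∨ ε = -1) ∧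
    (∀ j, c.hom (Xv j) ≠ 1 → t'.B (c.vmap j) (c.vmap k) = ε * t.B j k) ∧
    (∀ j', (∀ j, c.hom (Xv j) ≠ 1 → c.vmap j ≠ j') → t'.B j' (c.vmap k) = 0) ∧
    (ε = -1 → ∀ j ∈ t.uf, c.hom (Xv j) ≠ 1 → t.B j k = 0) := by
  classical
  intro k hk hkF
  set S : Finset I := Finset.univ.filter (fun j => c.hom (Xv j) ≠ 1) with hS
  set U : I' →₀ ℤ := ∑ j ∈ S, Finsupp.single (c.vmap j) (max (t.B j k) 0) with hU
  set V : I' →₀ ℤ := ∑ j ∈ S, Finsupp.single (c.vmap j) (max (-(t.B j k)) 0) with hV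
  set U' : I' →₀ ℤ := ∑ j', Finsupp.single j' (max (t'.B j' (c.vmap k)) 0) with hU'
  set V' : I' →₀ ℤ := ∑ j', Finsupp.single j' (max (-(t'.B j' (c.vmap k))) 0) with hV'
  have hinj : ∀ a ∈ S, ∀ b ∈ S, c.vmap a = c.vmap b → a = b := by
    intro a ha b hb hh
    exact c.vinj a b (by simpa [hS] using ha) (by simpa [hS] using hb) hh
  have lhs : c.hom (exchVar t.B k)
      = (AddMonoidAlgebra.single U (1:ℚ) + AddMonoidAlgebra.single V 1) * Xinv (c.vmap k) := by
    rw [exchVar, map_mul, map_add, S2hom_Xinv c hkF, finprod_eq_prod_of_fintype,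
      finprod_eq_prod_of_fintype, S2hom_prod_Xv_pow, S2hom_prod_Xv_pow]
  have rhs := S2exch_mono t'.B (c.vmap k)
  have key : AddMonoidAlgebra.single U (1:ℚ) + AddMonoidAlgebra.single V 1
      = AddMonoidAlgebra.single U' 1 + AddMonoidAlgebra.single V' 1 := by
    refine mul_right_cancel₀ (show Xinv (c.vmap k) ≠ 0 from S2mono_ne_zero _) ?_
    rw [← lhs, c.hmut k hk hkF, rhs]
  have evU : ∀ j, c.hom (Xv j) ≠ 1 → U (c.vmap j) = max (t.B j k) 0 := fun j hj =>
    S2sum_single_apply_mem S c.vmap _ hinj (by simp [hS, hj])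
  have evV : ∀ j, c.hom (Xv j) ≠ 1 → V (c.vmap j) = max (-(t.B j k)) 0 := fun j hj =>
    S2sum_single_apply_mem S c.vmap _ hinj (by simp [hS, hj])
  have evUo : ∀ j', (∀ j, c.hom (Xv j) ≠ 1 → c.vmap j ≠ j') → U j' = 0 := fun j' hj' =>
    S2sum_single_apply_not S c.vmap _ (fun j hj => hj' j (by simpa [hS] using hj))
  have evVo : ∀ j', (∀ j, c.hom (Xv j) ≠ 1 → c.vmap j ≠ j') → V j' = 0 := fun j' hj' =>
    S2sum_single_apply_not S c.vmap _ (fun j hj => hj' j (by simpa [hS] using hj))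
  have evU' : ∀ j', U' j' = max (t'.B j' (c.vmap k)) 0 := fun j' =>
    S2sum_single_apply_mem Finset.univ id _ (fun a _ b _ h => h) (Finset.mem_univ j')
  have evV' : ∀ j', V' j' = max (-(t'.B j' (c.vmap k))) 0 := fun j' =>
    S2sum_single_apply_mem Finset.univ id _ (fun a _ b _ h => h) (Finset.mem_univ j')
  rcases S2two_single_eq (u := U) (v := V) (u' := U') (v' := V') (congrArg AddMonoidAlgebra.coeff key) with ⟨hUU, hVV⟩ | ⟨hUV, hVU⟩
  · refine ⟨1, Or.inl rfl, ?_, ?_, by omega⟩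
    · intro j hj
      have e1 := (DFunLike.congr_fun hUU (c.vmap j)).trans (evU' (c.vmap j))
      have e2 := (DFunLike.congr_fun hVV (c.vmap j)).trans (evV' (c.vmap j))
      rw [evU j hj] at e1
      rw [evV j hj] at e2
      omega
    · intro j' hj'
      have e1 := (DFunLike.congr_fun hUU j').trans (evU' j')
      have e2 := (DFunLike.congr_fun hVV j').trans (evV' j')
      rw [evUo j' hj'] at e1
      rw [evVo j' hj'] at e2
      omega
  · have hBneg : ∀ j, c.hom (Xv j) ≠ 1 → t'.B (c.vmap j) (c.vmap k) = -(t.B j k) := by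
      intro j hj
      have e1 := (DFunLike.congr_fun hUV (c.vmap j)).trans (evV' (c.vmap j))
      have e2 := (DFunLike.congr_fun hVU (c.vmap j)).trans (evU' (c.vmap j))
      rw [evU j hj] at e1
      rw [evV j hj] at e2
      omega
    refine ⟨-1, Or.inr rfl, fun j hj => by rw [hBneg j hj]; ring, ?_, ?_⟩
    · intro j' hj'
      have e1 := (DFunLike.congr_fun hUV j').trans (evV' j')
      have e2 := (DFunLike.congr_fun hVU j').trans (evU' j')
      rw [evUo j' hj'] at e1
      rw [evVo j' hj'] at e2
      omega
    · intro _ j hj hjF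
      have hs := c.hsign j hj k hk hjF hkF
      rw [hBneg j hjF] at hs
      have h3 : t.B j k * t.B j k ≤ 0 := by nlinarith [hs]
      exact mul_self_eq_zero.mp (le_antisymm h3 (mul_self_nonneg _))

lemma S2Inv.base [Fintype I] [Fintype I'] (c : ClusterMorphism t t') :
    S2Inv t t' c t.B (xGen I) t'.B (xGen I') (fun _ => 1) (fun _ => 1) := by
  refine ⟨t.skew, ?_, fun j _ => rfl, S2base_colInv c, ?_, ?_, fun _ => one_pos, fun _ => one_pos⟩
  · intro j hj
    have := S2rel_map (χ := S2chi c) (Xv j)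
    rwa [S2chi_Xv_of_ne c hj] at this
  · intro j
    have := S2rel_map (χ := S2E I) (Xv j)
    rwa [S2E_Xv] at this
  · intro j'
    have := S2rel_map (χ := S2E I') (Xv j')
    rwa [S2E_Xv] at this

lemma S2Inv.steps [Fintype I] [Fintype I'] {c : ClusterMorphism t t'} (l : List I)
    (hl : ∀ k ∈ l, k ∈ t.uf ∧ c.hom (Xv k) ≠ 1)
    {B : I → I → ℤ} {x : I → LField I} {B' : I' → I' → ℤ} {y : I' → LField I'}
    {r : I → ℝ} {r' : I' → ℝ} (h : S2Inv t t' c B x B' y r r') :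
    S2Inv t t' c (mutSeq l (B, x)).1 (mutSeq l (B, x)).2
      (mutSeq (l.map c.vmap) (B', y)).1 (mutSeq (l.map c.vmap) (B', y)).2
      (mutSeq l (B, r)).2 (mutSeq (l.map c.vmap) (B', r')).2 := by
  induction l generalizing B x B' y r r' with
  | nil => simpa [mutSeq] using h
  | cons k l ih =>
    simp only [List.map_cons, S2mutSeq_cons]
    exact ih (fun k2 hk2 => hl k2 (List.mem_cons_of_mem _ hk2))
      (h.step (hl k List.mem_cons_self).1 (hl k List.mem_cons_self).2)

end Base

theorem statement2 {I I' : Type*} [Finite I] [Finite I'] (t : Seed I) (t' : Seed I')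
    (c : ClusterMorphism t t') (l : List I)
    (hl : ∀ k ∈ l, k ∈ t.uf ∧ c.hom (Xv k) ≠ 1)
    (i : I) (hiF : c.hom (Xv i) ≠ 1) :
    ∃ a b : LaurentRing I, b ≠ 0 ∧ c.hom b ≠ 0 ∧
      (mutSeq l (t.B, xGen I)).2 i =
        algebraMap (LaurentRing I) (LField I) a / algebraMap (LaurentRing I) (LField I) b ∧
      (mutSeq (l.map c.vmap) (t'.B, xGen I')).2 (c.vmap i) =
        algebraMap (LaurentRing I') (LField I') (c.hom a) /
          algebraMap (LaurentRing I') (LField I') (c.hom b) := by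
  classical
  cases nonempty_fintype I
  cases nonempty_fintype I'
  obtain ⟨a, b, hb, hchib, hxe, hze⟩ := ((S2Inv.base c).steps l hl).relphi i hiF
  refine ⟨a, b, hb, fun h0 => hchib (by rw [S2chi, RingHom.comp_apply, h0, map_zero]), hxe, ?_⟩
  exact hze


end
end

section
/- Let φ: L(t) → L(t') be a cluster morphism between seeds t = ({x_i}_{i∈I}, I_uf, B) and t' = ({y_j}_{j∈I'}, I'_uf, B'), with F = {i ∈ I : φ(x_i) = 1}, and let A_φ denote the cluster algebra with initial seed ({x_i}_{i∈I∖F}, I_uf∖F, B restricted to (I∖F) × (I_uf∖F)). Then φ maps every cluster monomial of A_φ to a cluster monomial of the cluster algebra A_{t'}. -/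
open scoped BigOperators

noncomputable section

namespace Aux

lemma single_one_mul {I : Type*} (d e : I →₀ ℤ) :
    ((AddMonoidAlgebra.single d 1 : LaurentRing I)) * AddMonoidAlgebra.single e 1
      = AddMonoidAlgebra.single (d + e) 1 := by
  rw [AddMonoidAlgebra.single_mul_single, mul_one]

lemma Xv_mul_Xinv {I : Type*} (i : I) : Xv i * Xinv i = 1 := by
  rw [Xv, Xinv, single_one_mul]
  simp [AddMonoidAlgebra.one_def]

lemma isUnit_single {I : Type*} (d : I →₀ ℤ) :
    IsUnit ((AddMonoidAlgebra.single d 1 : LaurentRing I) : LaurentRing I) := by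
  refine IsUnit.of_mul_eq_one (AddMonoidAlgebra.single (-d) 1) ?_
  rw [single_one_mul]; simp [AddMonoidAlgebra.one_def]

lemma Xv_pow {I : Type*} (i : I) (n : ℕ) :
    (Xv i : LaurentRing I) ^ n = AddMonoidAlgebra.single (Finsupp.single i (n : ℤ)) 1 := by
  rw [Xv, AddMonoidAlgebra.single_pow, one_pow, Finsupp.smul_single]
  norm_num

lemma prod_single {I J : Type*} (s : Finset J) (f : J → (I →₀ ℤ)) :
    (∏ j ∈ s, (AddMonoidAlgebra.single (f j) 1 : LaurentRing I))
      = AddMonoidAlgebra.single (∑ j ∈ s, f j) 1 := by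
  classical
  induction s using Finset.induction with
  | empty => simp [AddMonoidAlgebra.one_def]
  | insert a s h ih => simp [Finset.prod_insert h, Finset.sum_insert h, ih,
      single_one_mul]

end Aux

namespace Aux


/-- Nonnegative-coefficient nonzero Laurent polynomials. -/
def Pos {I : Type*} (p : LaurentRing I) : Prop := (∀ d, 0 ≤ p.coeff d) ∧ p ≠ 0

lemma Pos.add {I : Type*} {p q : LaurentRing I} (hp : Pos p) (hq : Pos q) : Pos (p + q) := by
  obtain ⟨hp1, hp2⟩ := hp
  obtain ⟨hq1, hq2⟩ := hq
  refine ⟨fun d => by simpa using add_nonneg (hp1 d) (hq1 d), ?_⟩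
  obtain ⟨d, hd⟩ := Finsupp.ne_iff.1 (mt AddMonoidAlgebra.coeff_eq_zero.1 hp2)
  simp only [Finsupp.coe_zero, Pi.zero_apply] at hd
  have h1 : (0:ℚ) < p.coeff d := lt_of_le_of_ne (hp1 d) (Ne.symm hd)
  have h2 : (0:ℚ) < p.coeff d + q.coeff d := lt_of_lt_of_le h1 (by linarith [hq1 d])
  refine mt AddMonoidAlgebra.coeff_eq_zero.2 (Finsupp.ne_iff.2 ⟨d, ?_⟩)
  simpa using h2.ne'

lemma Pos.mul {I : Type*} {p q : LaurentRing I} (hp : Pos p) (hq : Pos q) : Pos (p * q) := by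
  classical
  refine ⟨fun d => ?_, mul_ne_zero hp.2 hq.2⟩
  rw [AddMonoidAlgebra.coeff_mul]
  refine Finset.sum_nonneg fun a ha => Finset.sum_nonneg fun a' ha' => ?_
  dsimp only
  split
  · exact mul_nonneg (hp.1 a) (hq.1 a')
  · exact le_refl 0

lemma Pos.single {I : Type*} (d : I →₀ ℤ) : Pos (AddMonoidAlgebra.single d 1 : LaurentRing I) := by
  classical
  constructor
  · intro e
    rw [AddMonoidAlgebra.coeff_single_apply]
    split <;> norm_num
  · simp [AddMonoidAlgebra.single_eq_zero]

lemma Pos.one {I : Type*} : Pos (1 : LaurentRing I) := by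
  rw [AddMonoidAlgebra.one_def]; exact Pos.single 0

/-- key two-monomial comparison -/
lemma two_single_eq {I : Type*} {p q p' q' : I →₀ ℤ}
    (h : (AddMonoidAlgebra.single p 1 + AddMonoidAlgebra.single q 1 : LaurentRing I)
       = AddMonoidAlgebra.single p' 1 + AddMonoidAlgebra.single q' 1) :
    (p = p' ∧ q = q') ∨ (p = q' ∧ q = p') := by
  classical
  have key : ∀ x : I →₀ ℤ, ((if p = x then (1:ℚ) else 0) + (if q = x then 1 else 0))
      = ((if p' = x then (1:ℚ) else 0) + (if q' = x then 1 else 0)) := by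
    intro x
    have h0 : (AddMonoidAlgebra.single p 1 : LaurentRing I).coeff x + (AddMonoidAlgebra.single q 1 : LaurentRing I).coeff x
        = (AddMonoidAlgebra.single p' 1 : LaurentRing I).coeff x + (AddMonoidAlgebra.single q' 1 : LaurentRing I).coeff x := by
      rw [← Finsupp.add_apply, ← Finsupp.add_apply, ← AddMonoidAlgebra.coeff_add, ← AddMonoidAlgebra.coeff_add]
      exact congrArg (fun f : LaurentRing I => f.coeff x) h
    simpa [Finsupp.single_apply] using h0
  by_cases hpp : p' = p
  · left
    refine ⟨hpp.symm, ?_⟩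
    by_cases hqq : q = q'
    · exact hqq
    · exfalso
      by_cases hpq' : p = q'
      · -- p' = p = q'; eval at q
        have h2 := key q
        rw [if_pos rfl] at h2
        have e1 : (if p = q then (1:ℚ) else 0) = if p' = q then 1 else 0 := by
          rw [hpp]
        have e2 : (if q' = q then (1:ℚ) else 0) = if p = q then 1 else 0 := by
          by_cases hh : p = q
          · rw [if_pos hh, if_pos (by rw [← hpq', hh])]
          · rw [if_neg hh, if_neg (fun h3 : q' = q => hh (hpq'.trans h3))]
        rw [← e1, e2] at h2
        by_cases hh : p = q
        · exact hqq (hh.symm.trans hpq')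
        · rw [if_neg hh] at h2; norm_num at h2
      · -- eval at q'
        have h1 := key q'
        rw [if_neg hpq', if_neg hqq, if_pos rfl,
          if_neg (fun h3 : p' = q' => hpq' (hpp.symm.trans h3))] at h1
        norm_num at h1
  · right
    have h1 := key p
    rw [if_pos rfl, if_neg hpp] at h1
    have hq'p : q' = p := by
      by_contra hq'p
      rw [if_neg hq'p] at h1
      by_cases hqp : q = p <;> simp [hqp] at h1
    refine ⟨hq'p.symm, ?_⟩
    have h2 := key p'
    rw [if_pos rfl, if_neg (fun hh : p = p' => hpp hh.symm)] at h2
    by_cases hqp' : q = p'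
    · exact hqp'
    · exfalso
      rw [if_neg hqp', if_neg (fun hh : q' = p' => hpp (hh.symm.trans hq'p))] at h2
      norm_num at h2

end Aux

namespace Aux

open scoped Classical

section PP
variable {I' : Type*}

lemma iota_ne_zero {R : Type*} {p : LaurentRing R} (h : p ≠ 0) :
    algebraMap (LaurentRing R) (LField R) p ≠ 0 := fun h0 =>
  h (IsFractionRing.to_map_eq_zero_iff.mp h0)

/-- "positive" elements of the fraction field -/
def PP (z : LField I') : Prop :=
  ∃ p q : LaurentRing I', Pos p ∧ Pos q ∧
    z = algebraMap (LaurentRing I') (LField I') p / algebraMap (LaurentRing I') (LField I') q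

lemma div_div_eq {K : Type*} [Field K] (a b c d : K) : (a/b)/(c/d) = (a*d)/(b*c) := by
  rw [div_eq_mul_inv (a/b), inv_div, div_mul_div_comm]

lemma PP.ne_zero {z : LField I'} (h : PP z) : z ≠ 0 := by
  obtain ⟨p, q, hp, hq, rfl⟩ := h
  exact div_ne_zero (iota_ne_zero hp.2) (iota_ne_zero hq.2)

lemma PP.one : PP (1 : LField I') :=
  ⟨1, 1, Pos.one, Pos.one, by simp⟩

lemma PP.xGen (j : I') : PP (_root_.xGen I' j) := by
  refine ⟨Xv j, 1, Pos.single _, Pos.one, by rw [map_one, div_one]; rfl⟩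

lemma PP.mul {z w : LField I'} (hz : PP z) (hw : PP w) : PP (z * w) := by
  obtain ⟨p, q, hp, hq, rfl⟩ := hz
  obtain ⟨p', q', hp', hq', rfl⟩ := hw
  exact ⟨p * p', q * q', hp.mul hp', hq.mul hq', by rw [div_mul_div_comm, map_mul, map_mul]⟩

lemma PP.div {z w : LField I'} (hz : PP z) (hw : PP w) : PP (z / w) := by
  obtain ⟨p, q, hp, hq, rfl⟩ := hz
  obtain ⟨p', q', hp', hq', rfl⟩ := hw
  exact ⟨p * q', q * p', hp.mul hq', hq.mul hp', by rw [div_div_eq, map_mul, map_mul]⟩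

lemma PP.add {z w : LField I'} (hz : PP z) (hw : PP w) : PP (z + w) := by
  obtain ⟨p, q, hp, hq, rfl⟩ := hz
  obtain ⟨p', q', hp', hq', rfl⟩ := hw
  have hq0 := iota_ne_zero hq.2
  have hq'0 := iota_ne_zero hq'.2
  refine ⟨p * q' + q * p', q * q', (hp.mul hq').add (hq.mul hp'), hq.mul hq', ?_⟩
  rw [div_add_div _ _ hq0 hq'0]
  simp only [map_add, map_mul]

lemma PP.pow {z : LField I'} (hz : PP z) (n : ℕ) : PP (z ^ n) := by
  induction n with
  | zero => simpa using PP.one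
  | succ n ih => rw [pow_succ]; exact ih.mul hz

lemma PP.zpow {z : LField I'} (hz : PP z) (n : ℤ) (hn : 0 ≤ n) : PP (z ^ n) := by
  lift n to ℕ using hn
  rw [zpow_natCast]; exact hz.pow n

lemma PP.finprod {J : Type*} [Finite J] {f : J → LField I'} (hf : ∀ j, PP (f j)) :
    PP (∏ᶠ j : J, f j) := by
  have : Fintype J := Fintype.ofFinite J
  rw [finprod_eq_prod_of_fintype]
  exact Finset.prod_induction f PP (fun _ _ => PP.mul) PP.one (fun j _ => hf j)

end PP

section Rel
variable {I I' : Type*} {t : Seed I} {t' : Seed I'} (c : ClusterMorphism t t')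

/-- Elements related by the (partial) extension of `c.hom` to fraction fields. -/
def Rel (u : LField I) (v : LField I') : Prop :=
  ∃ a s : LaurentRing I, c.hom s ≠ 0 ∧
    u = algebraMap (LaurentRing I) (LField I) a / algebraMap (LaurentRing I) (LField I) s ∧
    v = algebraMap (LaurentRing I') (LField I') (c.hom a) /
        algebraMap (LaurentRing I') (LField I') (c.hom s)

lemma Rel.one : Rel c 1 1 :=
  ⟨1, 1, by simp, by simp, by simp⟩

lemma Rel.mul {u u' v v'} (h : Rel c u v) (h' : Rel c u' v') : Rel c (u * u') (v * v') := by
  obtain ⟨a, s, hs, rfl, rfl⟩ := h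
  obtain ⟨a', s', hs', rfl, rfl⟩ := h'
  exact ⟨a * a', s * s', by simp [mul_ne_zero hs hs'],
    by rw [div_mul_div_comm, map_mul, map_mul],
    by rw [div_mul_div_comm, map_mul, map_mul, map_mul, map_mul]⟩

lemma Rel.add {u u' v v'} (h : Rel c u v) (h' : Rel c u' v') : Rel c (u + u') (v + v') := by
  obtain ⟨a, s, hs, rfl, rfl⟩ := h
  obtain ⟨a', s', hs', rfl, rfl⟩ := h'
  have hs0 : algebraMap (LaurentRing I) (LField I) s ≠ 0 :=
    iota_ne_zero fun h0 => hs (by rw [h0, map_zero])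
  have hs'0 : algebraMap (LaurentRing I) (LField I) s' ≠ 0 :=
    iota_ne_zero fun h0 => hs' (by rw [h0, map_zero])
  have hhs0 : algebraMap (LaurentRing I') (LField I') (c.hom s) ≠ 0 := iota_ne_zero hs
  have hhs'0 : algebraMap (LaurentRing I') (LField I') (c.hom s') ≠ 0 := iota_ne_zero hs'
  refine ⟨a * s' + s * a', s * s', by simp [mul_ne_zero hs hs'], ?_, ?_⟩
  · rw [div_add_div _ _ hs0 hs'0]
    simp only [map_add, map_mul]
  · rw [div_add_div _ _ hhs0 hhs'0]
    simp only [map_add, map_mul]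

lemma Rel.div {u u' v v'} (h : Rel c u v) (h' : Rel c u' v') (hv' : v' ≠ 0) :
    Rel c (u / u') (v / v') := by
  obtain ⟨a, s, hs, rfl, rfl⟩ := h
  obtain ⟨a', s', hs', rfl, rfl⟩ := h'
  have ha' : c.hom a' ≠ 0 := by
    intro h0
    exact hv' (by rw [h0, map_zero, zero_div])
  exact ⟨a * s', s * a', by simp [mul_ne_zero hs ha'],
    by rw [div_div_eq, map_mul, map_mul],
    by rw [div_div_eq, map_mul, map_mul, map_mul, map_mul]⟩

lemma Rel.pow {u v} (h : Rel c u v) (n : ℕ) : Rel c (u ^ n) (v ^ n) := by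
  induction n with
  | zero => simpa using Rel.one c
  | succ n ih => rw [pow_succ, pow_succ]; exact ih.mul c h

lemma Rel.zpow {u v} (h : Rel c u v) (n : ℤ) (hn : 0 ≤ n) : Rel c (u ^ n) (v ^ n) := by
  lift n to ℕ using hn
  rw [zpow_natCast, zpow_natCast]; exact h.pow c n

lemma Rel.prod {J : Type*} (s : Finset J) (f : J → LField I) (g : J → LField I')
    (h : ∀ j ∈ s, Rel c (f j) (g j)) : Rel c (∏ j ∈ s, f j) (∏ j ∈ s, g j) := by
  classical
  induction s using Finset.induction with
  | empty => simpa using Rel.one c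
  | insert b s' hns ih =>
    rw [Finset.prod_insert hns, Finset.prod_insert hns]
    exact (h b (Finset.mem_insert_self b s')).mul c
      (ih fun j hj => h j (Finset.mem_insert_of_mem hj))

lemma Rel.finprod {J : Type*} [Finite J] (f : J → LField I) (g : J → LField I')
    (h : ∀ j, Rel c (f j) (g j)) : Rel c (∏ᶠ j : J, f j) (∏ᶠ j : J, g j) := by
  have : Fintype J := Fintype.ofFinite J
  rw [finprod_eq_prod_of_fintype, finprod_eq_prod_of_fintype]
  exact Rel.prod c _ _ _ fun j _ => h j

end Rel
end Aux


namespace Aux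

section Inv
variable {I I' : Type*} {t : Seed I} {t' : Seed I'} (c : ClusterMorphism t t')

/-- The index set `I ∖ F`. -/
abbrev Jt := {i : I // c.hom (Xv i) ≠ 1}

/-- The induced vertex map on `I ∖ F`. -/
def ee (j : Jt c) : I' := c.vmap j.1

lemma ee_inj : Function.Injective (ee c) := fun j j' h =>
  Subtype.ext (c.vinj _ _ j.2 j'.2 h)

lemma sign_mul_max (a b : ℤ) : a.sign * max (a * b) 0 = b.sign * max (a * b) 0 := by
  rcases lt_trichotomy (a * b) 0 with h | h | h
  · rw [max_eq_right h.le]; ring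
  · rw [h, max_self]; ring
  · rcases lt_trichotomy a 0 with ha | ha | ha
    · have hb : b < 0 := by nlinarith
      rw [Int.sign_eq_neg_one_of_neg ha, Int.sign_eq_neg_one_of_neg hb]
    · simp [ha] at h
    · have hb : 0 < b := by nlinarith
      rw [Int.sign_eq_one_of_pos ha, Int.sign_eq_one_of_pos hb]

lemma mutB_skew {J : Type*} (uf : Set J) (C : J → J → ℤ)
    (h : ∀ i ∈ uf, ∀ j ∈ uf, C i j = - C j i) (k : J) (hk : k ∈ uf) :
    ∀ i ∈ uf, ∀ j ∈ uf, mutB C k i j = - mutB C k j i := by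
  intro i hi j hj
  classical
  unfold mutB
  by_cases hc : i = k ∨ j = k
  · rw [if_pos hc, if_pos (Or.symm hc), h i hi j hj]
  · rw [if_neg hc, if_neg (fun hc' => hc (Or.symm hc'))]
    push_neg at hc
    have e1 : C j k = - C k j := h j hj k hk
    have e2 : C k i = - C i k := h k hk i hi
    rw [h i hi j hj]
    have key : (C i k).sign * max (C i k * C k j) 0
        = - ((C j k).sign * max (C j k * C k i) 0) := by
      rw [e1, e2, Int.sign_neg, show -C k j * -C i k = C i k * C k j by ring,
        sign_mul_max (C i k) (C k j)]
      ring
    rw [key]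
    ring

/-- The master invariant tying together the restricted seed pattern on `I ∖ F`
and the pattern of `t'`. -/
def Inv (C : Jt c → Jt c → ℤ) (u : Jt c → LField I) (C' : I' → I' → ℤ)
    (y : I' → LField I') : Prop :=
  (∀ i : Jt c, i.1 ∈ t.uf → ∀ j : Jt c, j.1 ∈ t.uf → C i j = - C j i) ∧
  (∀ j' : I', PP (y j')) ∧
  (∀ j : Jt c, Rel c (u j) (y (ee c j))) ∧
  (∀ i : Jt c, i.1 ∈ t.uf → ∃ ε : ℤ, (ε = 1 ∨ ε = -1) ∧
    (∀ j : Jt c, C' (ee c j) (ee c i) = ε * C j i) ∧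
    (∀ j' : I', (∀ j : Jt c, ee c j ≠ j') → C' j' (ee c i) = 0) ∧
    (ε = -1 → ∀ j : Jt c, j.1 ∈ t.uf → C j i = 0))

end Inv
end Aux


namespace Aux

lemma finprod_zpow_reindex {K : Type*} [Field K] {σ J' : Type*} [Finite σ] [Finite J']
    (e : σ → J') (he : Function.Injective e) (y : J' → K) (n : J' → ℤ)
    (h0 : ∀ j', (∀ s, e s ≠ j') → n j' = 0) :
    ∏ᶠ j' : J', y j' ^ n j' = ∏ᶠ s : σ, y (e s) ^ n (e s) := by
  have : Fintype σ := Fintype.ofFinite σ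
  have : Fintype J' := Fintype.ofFinite J'
  classical
  rw [finprod_eq_prod_of_fintype, finprod_eq_prod_of_fintype]
  rw [← Finset.prod_image (s := Finset.univ) (g := e)
    (f := fun j' => y j' ^ n j') (fun x _ y _ h => he h)]
  refine (Finset.prod_subset (Finset.subset_univ _) fun x _ hx => ?_).symm
  rw [h0 x fun s hs => hx (hs ▸ Finset.mem_image_of_mem e (Finset.mem_univ s)), zpow_zero]

lemma finprod_pow_reindex {K : Type*} [Field K] {σ J' : Type*} [Finite σ] [Finite J']
    (e : σ → J') (he : Function.Injective e) (y : J' → K) (n : J' → ℕ)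
    (h0 : ∀ j', (∀ s, e s ≠ j') → n j' = 0) :
    ∏ᶠ j' : J', y j' ^ n j' = ∏ᶠ s : σ, y (e s) ^ n (e s) := by
  have : Fintype σ := Fintype.ofFinite σ
  have : Fintype J' := Fintype.ofFinite J'
  classical
  rw [finprod_eq_prod_of_fintype, finprod_eq_prod_of_fintype]
  rw [← Finset.prod_image (s := Finset.univ) (g := e)
    (f := fun j' => y j' ^ n j') (fun x _ y _ h => he h)]
  refine (Finset.prod_subset (Finset.subset_univ _) fun x _ hx => ?_).symm
  rw [h0 x fun s hs => hx (hs ▸ Finset.mem_image_of_mem e (Finset.mem_univ s)), pow_zero]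

section Step
variable {I I' : Type*} [Finite I] [Finite I'] {t : Seed I} {t' : Seed I'}
  (c : ClusterMorphism t t')

lemma Inv.step {C : Jt c → Jt c → ℤ} {u : Jt c → LField I} {C' : I' → I' → ℤ}
    {y : I' → LField I'} (h : Inv c C u C' y) (k : Jt c) (hk : k.1 ∈ t.uf) :
    Inv c (mutB C k) (mutX C k u) (mutB C' (ee c k)) (mutX C' (ee c k) y) := by
  classical
  obtain ⟨hskew, hPP, hRel, hmat⟩ := h
  obtain ⟨εk, hεk, hcolk, hoffk, hnegk⟩ := hmat k hk
  have hPP' : ∀ j' : I', PP (mutX C' (ee c k) y j') := by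
    intro j'
    unfold mutX
    split
    · exact ((PP.finprod fun j'' => (hPP j'').zpow _ (le_max_right _ _)).add
        (PP.finprod fun j'' => (hPP j'').zpow _ (le_max_right _ _))).div (hPP _)
    · exact hPP j'
  refine ⟨mutB_skew {j : Jt c | j.1 ∈ t.uf} C hskew k hk, hPP', ?_, ?_⟩
  · -- Rel part
    intro j
    by_cases hj : j = k
    · subst hj
      rw [show mutX C j u j = ((∏ᶠ j'' : Jt c, u j'' ^ max (C j'' j) 0)
          + ∏ᶠ j'' : Jt c, u j'' ^ max (-(C j'' j)) 0) / u j by simp [mutX],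
        show mutX C' (ee c j) y (ee c j) = ((∏ᶠ j' : I', y j' ^ max (C' j' (ee c j)) 0)
          + ∏ᶠ j' : I', y j' ^ max (-(C' j' (ee c j))) 0) / y (ee c j) by simp [mutX]]
      have e1 : ∏ᶠ j' : I', y j' ^ max (C' j' (ee c j)) 0
          = ∏ᶠ s : Jt c, y (ee c s) ^ max (εk * C s j) 0 := by
        rw [finprod_zpow_reindex (ee c) (ee_inj c) y _
          (fun j' hj' => by rw [hoffk j' hj']; simp)]
        exact finprod_congr fun s => by rw [hcolk s]
      have e2 : ∏ᶠ j' : I', y j' ^ max (-(C' j' (ee c j))) 0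
          = ∏ᶠ s : Jt c, y (ee c s) ^ max (-(εk * C s j)) 0 := by
        rw [finprod_zpow_reindex (ee c) (ee_inj c) y _
          (fun j' hj' => by rw [hoffk j' hj']; simp)]
        exact finprod_congr fun s => by rw [hcolk s]
      rw [e1, e2]
      have RM : Rel c (∏ᶠ j'' : Jt c, u j'' ^ max (C j'' j) 0)
          (∏ᶠ s : Jt c, y (ee c s) ^ max (C s j) 0) :=
        Rel.finprod c _ _ fun s => (hRel s).zpow c _ (le_max_right _ _)
      have RN : Rel c (∏ᶠ j'' : Jt c, u j'' ^ max (-(C j'' j)) 0)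
          (∏ᶠ s : Jt c, y (ee c s) ^ max (-(C s j)) 0) :=
        Rel.finprod c _ _ fun s => (hRel s).zpow c _ (le_max_right _ _)
      rcases hεk with hε | hε
      · subst hε
        simp only [one_mul]
        exact ((RM.add c RN).div c (hRel j) (PP.ne_zero (hPP _)))
      · subst hε
        have e3 : ∀ s : Jt c, max ((-1 : ℤ) * C s j) 0 = max (-(C s j)) 0 := by
          intro s; rw [neg_one_mul]
        have e4 : ∀ s : Jt c, max (-((-1 : ℤ) * C s j)) 0 = max (C s j) 0 := by
          intro s; rw [neg_one_mul, neg_neg]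
        simp only [e3, e4]
        rw [add_comm (∏ᶠ s : Jt c, y (ee c s) ^ max (-(C s j)) 0)]
        exact ((RM.add c RN).div c (hRel j) (PP.ne_zero (hPP _)))
    · have hej : ee c j ≠ ee c k := fun hh => hj (ee_inj c hh)
      rw [show mutX C k u j = u j by simp [mutX, hj],
        show mutX C' (ee c k) y (ee c j) = y (ee c j) by simp [mutX, hej]]
      exact hRel j
  · -- matrix part
    intro i hi
    obtain ⟨εi, hεi, hcoli, hoffi, hnegi⟩ := hmat i hi
    refine ⟨εi, hεi, ?_, ?_, ?_⟩
    · intro j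
      have hcond : (ee c j = ee c k ∨ ee c i = ee c k) ↔ (j = k ∨ i = k) := by
        constructor
        · rintro (hh | hh)
          · exact Or.inl (ee_inj c hh)
          · exact Or.inr (ee_inj c hh)
        · rintro (hh | hh)
          · exact Or.inl (by rw [hh])
          · exact Or.inr (by rw [hh])
      unfold mutB
      by_cases hc : j = k ∨ i = k
      · rw [if_pos (hcond.2 hc), if_pos hc, hcoli j]; ring
      · rw [if_neg (fun hh => hc (hcond.1 hh)), if_neg hc, hcoli j, hcolk j, hcoli k]
        rcases hεi with hi1 | him1
        · rcases hεk with hk1 | hkm1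
          · subst hi1; subst hk1; simp only [one_mul]
          · subst hi1; subst hkm1
            have hCik : C i k = 0 := hnegk rfl i hi
            have hCki : C k i = 0 := by
              rw [hskew k hk i hi, hCik, neg_zero]
            rw [hCki]
            simp
        · subst him1
          have hCki : C k i = 0 := hnegi rfl k hk
          rw [hCki]
          simp
    · intro j' hj'
      unfold mutB
      by_cases hik : i = k
      · rw [if_pos (Or.inr (by rw [hik])), hoffi j' hj', neg_zero]
      · have h1 : ¬(j' = ee c k ∨ ee c i = ee c k) := by
          rintro (hh | hh)
          · exact hj' k hh.symm
          · exact hik (ee_inj c hh)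
        rw [if_neg h1, hoffi j' hj', hoffk j' hj']
        simp
    · intro hε j hj
      have hz : ∀ j'' : Jt c, j''.1 ∈ t.uf → C j'' i = 0 := hnegi hε
      unfold mutB
      by_cases hc : j = k ∨ i = k
      · rw [if_pos hc]
        rcases hc with hh | hh
        · rw [hz j hj, neg_zero]
        · subst hh
          rw [hz j hj, neg_zero]
      · rw [if_neg hc, hz j hj, hz k hk]
        simp

end Step
end Aux


namespace Aux

section Base
variable {I I' : Type*} [Finite I] [Finite I'] {t : Seed I} {t' : Seed I'}
  (c : ClusterMorphism t t')

lemma hom_Xv {j : Jt c} : c.hom (Xv j.1) = Xv (ee c j) :=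
  (c.hx j.1).resolve_left j.2

lemma hom_Xinv {j : Jt c} : c.hom (Xinv j.1) = Xinv (ee c j) := by
  have hne : (Xv (ee c j) : LaurentRing I') ≠ 0 := (Pos.single _).2
  apply mul_left_cancel₀ hne
  have h1 : Xv (ee c j) * c.hom (Xinv j.1) = 1 := by
    rw [← hom_Xv c, ← map_mul, Xv_mul_Xinv, map_one]
  rw [h1, Xv_mul_Xinv]

variable [Fintype I] [Fintype I']

open Classical in
/-- The exponent vector of the image under `c.hom` of the monomial `∏ x_j ^ n j`. -/
def Msum (n : I → ℕ) : I' →₀ ℤ :=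
  ∑ j : I, if c.hom (Xv j) = 1 then 0 else Finsupp.single (c.vmap j) ((n j : ℤ))

lemma hom_monomial (n : I → ℕ) :
    c.hom (∏ᶠ j : I, Xv j ^ n j) = AddMonoidAlgebra.single (Msum c n) 1 := by
  classical
  rw [finprod_eq_prod_of_fintype, map_prod]
  have key : ∀ j : I, c.hom (Xv j ^ n j)
      = AddMonoidAlgebra.single
          (if c.hom (Xv j) = 1 then 0 else Finsupp.single (c.vmap j) ((n j : ℤ))) 1 := by
    intro j
    by_cases hj : c.hom (Xv j) = 1
    · rw [if_pos hj, map_pow, hj, one_pow, ← AddMonoidAlgebra.one_def]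
    · rw [if_neg hj, map_pow, (c.hx j).resolve_left hj, Xv_pow]
  rw [Finset.prod_congr rfl fun j _ => key j, prod_single, Msum]

lemma Msum_off (n : I → ℕ) {j' : I'} (hj' : ∀ s : Jt c, ee c s ≠ j') :
    Msum c n j' = 0 := by
  classical
  rw [Msum, Finsupp.finset_sum_apply]
  refine Finset.sum_eq_zero fun j _ => ?_
  by_cases hj : c.hom (Xv j) = 1
  · rw [if_pos hj]; rfl
  · rw [if_neg hj, Finsupp.single_apply,
      if_neg (show ¬ c.vmap j = j' from hj' ⟨j, hj⟩)]

lemma Msum_at (n : I → ℕ) (s : Jt c) : Msum c n (ee c s) = (n s.1 : ℤ) := by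
  classical
  rw [Msum, Finsupp.finset_sum_apply]
  rw [Finset.sum_eq_single s.1]
  · rw [if_neg s.2, Finsupp.single_apply, if_pos (show c.vmap s.1 = ee c s from rfl)]
  · intro j _ hjs
    by_cases hj : c.hom (Xv j) = 1
    · rw [if_pos hj]; rfl
    · rw [if_neg hj, Finsupp.single_apply,
        if_neg (fun hh : c.vmap j = ee c s => hjs (c.vinj j s.1 hj s.2 hh))]
  · intro hj
    exact absurd (Finset.mem_univ s.1) hj

/-- The exponent vector of the monomial `∏ y_{j'} ^ m j'` on the `I'` side. -/
def Nsum (m : I' → ℕ) : I' →₀ ℤ := ∑ j' : I', Finsupp.single j' ((m j' : ℤ))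

lemma monomial_eq (m : I' → ℕ) :
    (∏ᶠ j' : I', (Xv j' : LaurentRing I') ^ m j')
      = AddMonoidAlgebra.single (Nsum m) 1 := by
  rw [finprod_eq_prod_of_fintype]
  rw [Finset.prod_congr rfl fun j' _ => Xv_pow j' (m j'), prod_single, Nsum]

lemma Nsum_at (m : I' → ℕ) (j'₀ : I') : Nsum m j'₀ = (m j'₀ : ℤ) := by
  classical
  rw [Nsum, Finsupp.finset_sum_apply]
  rw [Finset.sum_eq_single j'₀]
  · rw [Finsupp.single_apply, if_pos rfl]
  · intro j' _ hj'
    rw [Finsupp.single_apply, if_neg hj']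
  · intro hj'
    exact absurd (Finset.mem_univ j'₀) hj'

/-- Base case of the matrix invariant, extracted from `hmut` and `hsign`. -/
lemma base_matrix (i : Jt c) (hi : i.1 ∈ t.uf) :
    ∃ ε : ℤ, (ε = 1 ∨ ε = -1) ∧
      (∀ j : Jt c, t'.B (ee c j) (ee c i) = ε * t.B j.1 i.1) ∧
      (∀ j' : I', (∀ j : Jt c, ee c j ≠ j') → t'.B j' (ee c i) = 0) ∧
      (ε = -1 → ∀ j : Jt c, j.1 ∈ t.uf → t.B j.1 i.1 = 0) := by
  classical
  have hmut := c.hmut i.1 hi i.2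
  rw [show c.vmap i.1 = ee c i from rfl] at hmut
  rw [exchVar, exchVar, map_mul, map_add,
    hom_monomial c (fun j => (max (t.B j i.1) 0).toNat),
    hom_monomial c (fun j => (max (-(t.B j i.1)) 0).toNat), hom_Xinv c,
    monomial_eq (fun j' => (max (t'.B j' (ee c i)) 0).toNat),
    monomial_eq (fun j' => (max (-(t'.B j' (ee c i))) 0).toNat)] at hmut
  have hXinv_ne : (Xinv (ee c i) : LaurentRing I') ≠ 0 := (Pos.single _).2
  have heq := mul_right_cancel₀ hXinv_ne hmut
  rcases two_single_eq heq with ⟨h1, h2⟩ | ⟨h1, h2⟩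
  · refine ⟨1, Or.inl rfl, ?_, ?_, ?_⟩
    · intro j
      have e1 := congrArg (fun f : I' →₀ ℤ => f (ee c j)) h1
      have e2 := congrArg (fun f : I' →₀ ℤ => f (ee c j)) h2
      simp only [Msum_at, Nsum_at] at e1 e2
      have p1 : ((max (t.B j.1 i.1) 0).toNat : ℤ) = max (t.B j.1 i.1) 0 :=
        Int.toNat_of_nonneg (le_max_right _ _)
      omega
    · intro j' hj'
      have e1 := congrArg (fun f : I' →₀ ℤ => f j') h1
      have e2 := congrArg (fun f : I' →₀ ℤ => f j') h2
      simp only [Msum_off c _ hj', Nsum_at] at e1 e2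
      omega
    · intro hh
      exact absurd hh (by norm_num)
  · refine ⟨-1, Or.inr rfl, ?_, ?_, ?_⟩
    · intro j
      have e1 := congrArg (fun f : I' →₀ ℤ => f (ee c j)) h1
      have e2 := congrArg (fun f : I' →₀ ℤ => f (ee c j)) h2
      simp only [Msum_at, Nsum_at] at e1 e2
      omega
    · intro j' hj'
      have e1 := congrArg (fun f : I' →₀ ℤ => f j') h1
      have e2 := congrArg (fun f : I' →₀ ℤ => f j') h2
      simp only [Msum_off c _ hj', Nsum_at] at e1 e2
      omega
    · intro _ j hj
      have hs := c.hsign j.1 hj i.1 hi j.2 i.2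
      rw [show c.vmap j.1 = ee c j from rfl, show c.vmap i.1 = ee c i from rfl] at hs
      have e1 := congrArg (fun f : I' →₀ ℤ => f (ee c j)) h1
      have e2 := congrArg (fun f : I' →₀ ℤ => f (ee c j)) h2
      simp only [Msum_at, Nsum_at] at e1 e2
      have hB' : t'.B (ee c j) (ee c i) = -(t.B j.1 i.1) := by
        have p1 : ((max (t.B j.1 i.1) 0).toNat : ℤ) = max (t.B j.1 i.1) 0 :=
          Int.toNat_of_nonneg (le_max_right _ _)
        omega
      rw [hB'] at hs
      nlinarith

end Base
end Aux


namespace Aux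

section Final
variable {I I' : Type*} [Finite I] [Finite I'] {t : Seed I} {t' : Seed I'}
  (c : ClusterMorphism t t')

lemma Inv.mutSeq_inv {C : Jt c → Jt c → ℤ} {u : Jt c → LField I} {C' : I' → I' → ℤ}
    {y : I' → LField I'} (h : Inv c C u C' y) (l : List (Jt c))
    (hl : ∀ k ∈ l, k.1 ∈ t.uf) :
    Inv c (mutSeq l (C, u)).1 (mutSeq l (C, u)).2
      (mutSeq (l.map (ee c)) (C', y)).1 (mutSeq (l.map (ee c)) (C', y)).2 := by
  induction l generalizing C u C' y with
  | nil => exact h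
  | cons k l ih =>
    have h1 : mutSeq (k :: l) (C, u) = mutSeq l (mutB C k, mutX C k u) := rfl
    have h2 : mutSeq ((k :: l).map (ee c)) (C', y)
        = mutSeq (l.map (ee c)) (mutB C' (ee c k), mutX C' (ee c k) y) := rfl
    rw [h1, h2]
    exact ih (h.step c k (hl k List.mem_cons_self))
      fun k' hk' => hl k' (List.mem_cons_of_mem k hk')

lemma Inv.base :
    Inv c (fun i j : Jt c => t.B i.1 j.1) (fun i : Jt c => xGen I i.1) t'.B (xGen I') := by
  have : Fintype I := Fintype.ofFinite I
  have : Fintype I' := Fintype.ofFinite I'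
  refine ⟨fun i hi j hj => t.skew i.1 hi j.1 hj, fun j' => PP.xGen j', fun j => ?_,
    fun i hi => base_matrix c i hi⟩
  refine ⟨Xv j.1, 1, by simp, ?_, ?_⟩
  · rw [map_one, div_one]; rfl
  · rw [map_one, map_one, div_one, hom_Xv c]; rfl

end Final
end Aux

open Aux in
theorem statement6' {I I' : Type*} [Finite I] [Finite I'] (t : Seed I) (t' : Seed I')
    (c : ClusterMorphism t t') (m : LField I)
    (hm : IsClusterMonomial (K := LField I)
        {i : {i : I // c.hom (Xv i) ≠ 1} | (i : I) ∈ t.uf}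
        (fun i j => t.B i j) (fun i => xGen I i) m) :
    ∃ a b : LaurentRing I, b ≠ 0 ∧ c.hom b ≠ 0 ∧
      m = algebraMap (LaurentRing I) (LField I) a /
            algebraMap (LaurentRing I) (LField I) b ∧
      IsClusterMonomial t'.uf t'.B (xGen I')
        (algebraMap (LaurentRing I') (LField I') (c.hom a) /
          algebraMap (LaurentRing I') (LField I') (c.hom b)) := by
  classical
  obtain ⟨l, hl, a, rfl⟩ := hm
  have hl' : ∀ k ∈ l, k.1 ∈ t.uf := hl
  have hinv := (Inv.base c).mutSeq_inv c l hl'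
  obtain ⟨hskew, hPP, hRel, hmat⟩ := hinv
  set u := (mutSeq l (fun i j : Jt c => t.B i.1 j.1, fun i : Jt c => xGen I i.1)).2 with hu
  set y := (mutSeq (l.map (ee c)) (t'.B, xGen I')).2 with hy
  have hrelm : Rel c (∏ᶠ j : Jt c, u j ^ a j) (∏ᶠ j : Jt c, y (ee c j) ^ a j) :=
    Rel.finprod c _ _ fun j => (hRel j).pow c (a j)
  obtain ⟨A, S, hS, hmeq, hveq⟩ := hrelm
  refine ⟨A, S, fun h0 => hS (by rw [h0, map_zero]), hS, hmeq, ?_⟩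
  refine ⟨l.map (ee c), ?_, ?_⟩
  · intro k hk
    obtain ⟨j, hj, rfl⟩ := List.mem_map.1 hk
    exact c.huf j.1 (hl' j hj) j.2
  · refine ⟨fun j' => if h : ∃ s : Jt c, ee c s = j' then a h.choose else 0, ?_⟩
    rw [← hveq, show (mutSeq (l.map (ee c)) (t'.B, xGen I')).2 = y from hy.symm]
    rw [finprod_pow_reindex (ee c) (ee_inj c) y _
      (fun j' hj' => dif_neg (fun ⟨s, hs⟩ => hj' s hs))]
    refine finprod_congr fun s => ?_
    have hex : ∃ s' : Jt c, ee c s' = ee c s := ⟨s, rfl⟩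
    rw [dif_pos hex, ee_inj c hex.choose_spec]


/-- Let `φ : L(t) → L(t')` be a cluster morphism with
`F = {i ∈ I : φ(x_i) = 1}`, and let `A_φ` be the cluster algebra with initial seed
`({x_i}_{i ∈ I∖F}, I_uf∖F, B restricted to (I∖F) × (I_uf∖F))` (inside `Frac L(t)`).
Then `φ` maps every cluster monomial of `A_φ` to a cluster monomial of `A_{t'}`:
any cluster monomial `m` of `A_φ` has a representation `a / b` with `φ(b) ≠ 0`, and
`φ(a) / φ(b)` is a cluster monomial of `A_{t'}`. -/
theorem statement6 {I I' : Type*} [Finite I] [Finite I'] (t : Seed I) (t' : Seed I')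
    (c : ClusterMorphism t t') (m : LField I)
    (hm : IsClusterMonomial (K := LField I)
        {i : {i : I // c.hom (Xv i) ≠ 1} | (i : I) ∈ t.uf}
        (fun i j => t.B i j) (fun i => xGen I i) m) :
    ∃ a b : LaurentRing I, b ≠ 0 ∧ c.hom b ≠ 0 ∧
      m = algebraMap (LaurentRing I) (LField I) a /
            algebraMap (LaurentRing I) (LField I) b ∧
      IsClusterMonomial t'.uf t'.B (xGen I')
        (algebraMap (LaurentRing I') (LField I') (c.hom a) /
          algebraMap (LaurentRing I') (LField I') (c.hom b)) :=
  statement6' t t' c m hm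

end
end

section
/- Let φ: L(t) → L(t') be a cluster morphism between seeds t = ({x_i}_{i∈I}, I_uf, B) and t' = ({y_j}_{j∈I'}, I'_uf, B'), and let F = {i ∈ I : φ(x_i) = 1}. Then the kernel of φ is the ideal of the Laurent polynomial ring L(t) generated by the elements x_i − 1 for i ∈ F. -/
open scoped BigOperators

noncomputable section

section Aux

variable {K : Type*}

/-- The Laurent variable `x_i` as a unit of the Laurent ring. -/
def Uv (i : K) : (LaurentRing K)ˣ where
  val := Xv i
  inv := Xinv i
  val_inv := by
    simp [Xv, Xinv, AddMonoidAlgebra.single_mul_single, AddMonoidAlgebra.one_def,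
      ← Finsupp.single_add]
  inv_val := by
    simp [Xv, Xinv, AddMonoidAlgebra.single_mul_single, AddMonoidAlgebra.one_def,
      ← Finsupp.single_add]

lemma Uv_zpow (i : K) (n : ℤ) :
    ((Uv i ^ n : (LaurentRing K)ˣ) : LaurentRing K)
      = AddMonoidAlgebra.single (Finsupp.single i n) 1 := by
  induction n using Int.induction_on with
  | zero => simp [AddMonoidAlgebra.one_def]
  | succ n ih =>
      rw [zpow_add_one, Units.val_mul, ih]
      show _ * (Xv i) = _
      rw [Xv, AddMonoidAlgebra.single_mul_single, ← Finsupp.single_add, mul_one]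
  | pred n ih =>
      rw [zpow_sub_one, Units.val_mul, ih]
      show _ * (Xinv i) = _
      rw [Xinv, AddMonoidAlgebra.single_mul_single, ← Finsupp.single_add, mul_one,
        sub_eq_add_neg]

lemma unit_pow_sub_one_mem {R : Type*} [CommRing R] (u : Rˣ) (n : ℕ) :
    ((u ^ n : Rˣ) : R) - 1 ∈ Ideal.span {(u : R) - 1} := by
  induction n with
  | zero => simp
  | succ n ih =>
      have : ((u ^ (n + 1) : Rˣ) : R) - 1
          = ((u ^ n : Rˣ) : R) * ((u : R) - 1) + (((u ^ n : Rˣ) : R) - 1) := by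
        push_cast [pow_succ]; ring
      rw [this]
      exact Ideal.add_mem _ (Ideal.mul_mem_left _ _ (Ideal.subset_span rfl)) ih

lemma unit_zpow_sub_one_mem {R : Type*} [CommRing R] (u : Rˣ) (n : ℤ) :
    ((u ^ n : Rˣ) : R) - 1 ∈ Ideal.span {(u : R) - 1} := by
  cases n with
  | ofNat k => rw [Int.ofNat_eq_coe, zpow_natCast]; exact unit_pow_sub_one_mem u k
  | negSucc k =>
      have key : ((u ^ Int.negSucc k : Rˣ) : R) - 1
          = -((u ^ Int.negSucc k : Rˣ) : R) * (((u ^ (k + 1) : Rˣ) : R) - 1) := by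
        have h : ((u ^ Int.negSucc k : Rˣ) : R) * ((u ^ (k + 1) : Rˣ) : R) = 1 := by
          rw [← Units.val_mul, ← zpow_natCast u (k + 1), ← zpow_add,
            show Int.negSucc k + ((k + 1 : ℕ) : ℤ) = 0 by push_cast [Int.negSucc_eq]; ring,
            zpow_zero,
            Units.val_one]
        rw [neg_mul, mul_sub, h, mul_comm]
        ring
      rw [key]
      exact Ideal.mul_mem_left _ _ (unit_pow_sub_one_mem u (k + 1))

end Aux

/-- The kernel of a cluster morphism `φ : L(t) → L(t')` is the ideal of
the Laurent polynomial ring `L(t)` generated by the elements `x_i - 1` for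
`i ∈ F = {i ∈ I : φ(x_i) = 1}`. -/
theorem statement7 {I I' : Type*} [Finite I] [Finite I'] (t : Seed I) (t' : Seed I')
    (c : ClusterMorphism t t') :
    RingHom.ker c.hom = Ideal.span ((fun i => Xv i - 1) '' {i : I | c.hom (Xv i) = 1}) := by
  classical
  set J : Ideal (LaurentRing I) :=
    Ideal.span ((fun i => Xv i - 1) '' {i : I | c.hom (Xv i) = 1}) with hJ
  set p : I → Prop := fun i => ¬ c.hom (Xv i) = 1 with hp
  -- the two additive monoid homs on exponent groups
  set πh : (I →₀ ℤ) →+ (I →₀ ℤ) := Finsupp.filterAddHom p with hπh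
  set vh : (I →₀ ℤ) →+ (I' →₀ ℤ) := Finsupp.mapDomain.addMonoidHom c.vmap with hvh
  set ψ : LaurentRing I →+* LaurentRing I := AddMonoidAlgebra.mapDomainRingHom ℚ πh with hψ
  set χ : LaurentRing I →+* LaurentRing I' := AddMonoidAlgebra.mapDomainRingHom ℚ vh with hχ
  have hψ_apply : ∀ q : LaurentRing I, ψ q = AddMonoidAlgebra.mapDomain πh q := fun _ => rfl
  have hχ_apply : ∀ q : LaurentRing I, χ q = AddMonoidAlgebra.mapDomain vh q := fun _ => rfl
  -- the factorization c.hom = χ ∘ ψ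
  have hcomp : c.hom = χ.comp ψ := by
    apply AddMonoidAlgebra.ringHom_ext
    · intro b
      have h1 : (AddMonoidAlgebra.single (0 : I →₀ ℤ) b : LaurentRing I)
          = algebraMap ℚ (LaurentRing I) b := by
        simp [AddMonoidAlgebra.coe_algebraMap]
      rw [h1, RingHom.map_rat_algebraMap, RingHom.map_rat_algebraMap]
    · intro a
      induction a using Finsupp.induction_linear with
      | zero =>
          have : (AddMonoidAlgebra.single (0 : I →₀ ℤ) (1 : ℚ) : LaurentRing I) = 1 :=
            (AddMonoidAlgebra.one_def).symm
          rw [this, map_one, map_one]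
      | add f g hf hg =>
          have hsingle : (AddMonoidAlgebra.single (f + g) (1 : ℚ) : LaurentRing I)
              = AddMonoidAlgebra.single f 1 * AddMonoidAlgebra.single g 1 := by
            rw [AddMonoidAlgebra.single_mul_single, mul_one]
          rw [hsingle, map_mul, map_mul, hf, hg]
      | single i n =>
          rw [← Uv_zpow i n]
          have lhs1 : c.hom ((Uv i ^ n : (LaurentRing I)ˣ) : LaurentRing I)
              = ((Units.map (c.hom : LaurentRing I →* LaurentRing I') (Uv i) ^ n :
                  (LaurentRing I')ˣ) : LaurentRing I') := by
            rw [← map_zpow, Units.coe_map]; rfl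
          rw [lhs1]
          have rhs1 : (χ.comp ψ) ((Uv i ^ n : (LaurentRing I)ˣ) : LaurentRing I)
              = AddMonoidAlgebra.single
                  (Finsupp.mapDomain c.vmap (Finsupp.filter p (Finsupp.single i n))) 1 := by
            rw [Uv_zpow, RingHom.comp_apply, hψ_apply, hχ_apply]
            show AddMonoidAlgebra.mapDomain vh (AddMonoidAlgebra.mapDomain πh
                (AddMonoidAlgebra.single (Finsupp.single i n) (1 : ℚ))) = _
            rw [AddMonoidAlgebra.mapDomain_single, AddMonoidAlgebra.mapDomain_single]
            rfl
          rw [rhs1]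
          by_cases h : c.hom (Xv i) = 1
          · have hu : Units.map (c.hom : LaurentRing I →* LaurentRing I') (Uv i) = 1 := by
              apply Units.ext
              rw [Units.coe_map]
              exact h
            rw [hu, one_zpow, Units.val_one,
              Finsupp.filter_single_of_neg p (show ¬ p i from not_not_intro h),
              Finsupp.mapDomain_zero]
            exact (AddMonoidAlgebra.one_def).symm
          · have hXv : c.hom (Xv i) = Xv (c.vmap i) := (c.hx i).resolve_left h
            have hu : Units.map (c.hom : LaurentRing I →* LaurentRing I') (Uv i)
                = Uv (c.vmap i) := by
              apply Units.ext
              rw [Units.coe_map]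
              exact hXv
            rw [hu, Uv_zpow, Finsupp.filter_single_of_pos p (show p i from h),
              Finsupp.mapDomain_single]
  -- membership lemma: single m 1 - single (filter p m) 1 ∈ J
  have hC : ∀ m : I →₀ ℤ,
      (AddMonoidAlgebra.single m (1 : ℚ) : LaurentRing I)
        - AddMonoidAlgebra.single (Finsupp.filter p m) 1 ∈ J := by
    intro m
    induction m using Finsupp.induction_linear with
    | zero => rw [Finsupp.filter_zero, sub_self]; exact J.zero_mem
    | add f g hf hg =>
        have e : (AddMonoidAlgebra.single (f + g) (1 : ℚ) : LaurentRing I)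
            - AddMonoidAlgebra.single (Finsupp.filter p (f + g)) 1
            = AddMonoidAlgebra.single f 1 *
                (AddMonoidAlgebra.single g 1
                  - AddMonoidAlgebra.single (Finsupp.filter p g) 1)
              + (AddMonoidAlgebra.single f 1
                  - AddMonoidAlgebra.single (Finsupp.filter p f) 1) *
                AddMonoidAlgebra.single (Finsupp.filter p g) 1 := by
          rw [Finsupp.filter_add]
          simp only [mul_sub, sub_mul, AddMonoidAlgebra.single_mul_single, mul_one]
          ring
        rw [e]
        exact Ideal.add_mem _ (Ideal.mul_mem_left _ _ hg) (Ideal.mul_mem_right _ _ hf)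
    | single i n =>
        by_cases h : c.hom (Xv i) = 1
        · rw [Finsupp.filter_single_of_neg p (show ¬ p i from not_not_intro h)]
          have e1 : (AddMonoidAlgebra.single (0 : I →₀ ℤ) (1 : ℚ) : LaurentRing I) = 1 :=
            (AddMonoidAlgebra.one_def).symm
          rw [e1, ← Uv_zpow i n]
          refine Ideal.span_mono ?_ (unit_zpow_sub_one_mem (Uv i) n)
          rintro x rfl
          exact ⟨i, h, rfl⟩
        · rw [Finsupp.filter_single_of_pos p (show p i from h), sub_self]
          exact J.zero_mem
  apply le_antisymm
  · -- ker ⊆ span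
    intro q hq
    rw [RingHom.mem_ker] at hq
    -- q - ψ q ∈ J
    have key : q - ψ q ∈ J := by
      have hqe : q = ∑ m ∈ q.coeff.support, AddMonoidAlgebra.single m (q.coeff m) :=
        (AddMonoidAlgebra.sum_coeff_single q).symm
      have hψe : ψ q = ∑ m ∈ q.coeff.support, AddMonoidAlgebra.single (πh m) (q.coeff m) := by
        conv_lhs => rw [← AddMonoidAlgebra.sum_coeff_single q]
        rw [Finsupp.sum, map_sum]; simp only [hψ_apply, AddMonoidAlgebra.mapDomain_single]
      have hdiff : q - ψ q
          = ∑ m ∈ q.coeff.support,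
              (AddMonoidAlgebra.single m (q.coeff m) - AddMonoidAlgebra.single (πh m) (q.coeff m)) := by
        rw [Finset.sum_sub_distrib, ← hqe, ← hψe]
      rw [hdiff]
      apply Ideal.sum_mem
      intro m _
      have e : (AddMonoidAlgebra.single m (q.coeff m) : LaurentRing I)
          - AddMonoidAlgebra.single (πh m) (q.coeff m)
          = (AddMonoidAlgebra.single m 1
              - AddMonoidAlgebra.single (Finsupp.filter p m) 1)
            * AddMonoidAlgebra.single 0 (q.coeff m) := by
        rw [sub_mul, AddMonoidAlgebra.single_mul_single, AddMonoidAlgebra.single_mul_single]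
        simp only [add_zero, one_mul]
        rfl
      rw [e]
      exact Ideal.mul_mem_right _ _ (hC m)
    -- ψ q = 0
    have hχψ : χ (ψ q) = 0 := by
      rw [← RingHom.comp_apply, ← hcomp]; exact hq
    have hψ0 : ψ q = 0 := by
      set S₀ : Set I := {i : I | ¬ c.hom (Xv i) = 1} with hS₀
      have hvinj : Set.InjOn c.vmap S₀ := fun i hi i' hi' h => c.vinj i i' hi hi' h
      set SS : Set (I →₀ ℤ) := {m | (m.support : Set I) ⊆ S₀} with hSS
      have hvh_inj : Set.InjOn (⇑vh) SS := by
        intro m hm m' hm' he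
        exact Finsupp.mapDomain_injOn S₀ hvinj hm hm' he
      have hinj2 := Finsupp.mapDomain_injOn SS hvh_inj (M := ℚ)
      have hmem : ((ψ q).coeff.support : Set (I →₀ ℤ)) ⊆ SS := by
        intro m hm
        rw [hψ_apply] at hm
        have := Finsupp.mapDomain_support (f := ⇑πh) (s := q.coeff)
            (Finset.mem_coe.mp hm)
        rw [Finset.mem_image] at this
        obtain ⟨m', _, rfl⟩ := this
        intro i hi
        have : i ∈ (Finsupp.filter p m').support := hi
        rw [Finsupp.support_filter, Finset.mem_filter] at this
        exact this.2
      have h0mem : (((0 : LaurentRing I).coeff.support : Set (I →₀ ℤ))) ⊆ SS := by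
        simp
      have h3 := hinj2 hmem h0mem (by
        show (χ (ψ q)).coeff = (χ 0).coeff
        rw [hχψ, map_zero])
      exact congrArg AddMonoidAlgebra.ofCoeff h3
    have : q = q - ψ q := by rw [hψ0, sub_zero]
    rw [this]
    exact key
  · -- span ⊆ ker
    rw [hJ, Ideal.span_le]
    rintro x ⟨i, hi, rfl⟩
    rw [SetLike.mem_coe, RingHom.mem_ker, map_sub, map_one, hi, sub_self]

end
end

section
/- Every bijective cluster morphism φ: L(t) → L(t') between seeds t = ({x_i}_{i∈I}, I_uf, B) and t' = ({y_j}_{j∈I'}, I'_uf, B') decomposes as φ = 𝔉_E ∘ 𝔖_σ, the composite of a similarity morphism 𝔖_σ (for the bijection σ: I → I' induced by φ) followed by a freezing morphism 𝔉_E (for E = I'_uf ∖ φ(I_uf)); equivalently, every bijective cluster morphism is a composition of a similarity and a freezing. -/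
open scoped BigOperators

noncomputable section

/-- The ring homomorphism between Laurent rings induced by a map of the variable
index sets, `x_i ↦ x_{f i}`. -/
def reindexHom {I I' : Type*} (f : I → I') : LaurentRing I →+* LaurentRing I' :=
  AddMonoidAlgebra.mapDomainRingHom ℚ (Finsupp.mapDomain.addMonoidHom f)

/-- The deleting morphism `Del_F`: the ring homomorphism with `x_i ↦ 1` for `i ∈ F` and
`x_j ↦ x_j` for `j ∉ F`. -/
def DelHom {I : Type*} (F : Set I) : LaurentRing I →+* LaurentRing {i : I // i ∉ F} :=
  AddMonoidAlgebra.mapDomainRingHom ℚ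
    (AddMonoidHom.mk' (Finsupp.subtypeDomain (fun i => i ∉ F))
      (fun _ _ => Finsupp.subtypeDomain_add))

/-- The similarity morphism `𝔖_σ`: the ring homomorphism with `x_i ↦ y_{σ i}`. -/
def SimHom {I I' : Type*} (σ : I → I') : LaurentRing I →+* LaurentRing I' :=
  reindexHom σ

/-- The freezing morphism `𝔉_E` attached to a set `E` of unfrozen vertices: on the level
of the Laurent polynomial rings it is the identity ring map (only the seed data changes). -/
def FreezeHom {I : Type*} {γ : Type*} (_E : Set γ) : LaurentRing I →+* LaurentRing I :=
  RingHom.id _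

/-- The adding-vertices morphism `𝔈_H`, attached to the complement `s = I' ∖ H` of the
added vertex set: the inclusion `y_j ↦ y_j` of the Laurent polynomial ring on the
variables indexed by `s`. -/
def IncHom {I' : Type*} (s : Set I') : LaurentRing ↥s →+* LaurentRing I' :=
  reindexHom (Subtype.val : ↥s → I')

lemma Xv_ne_one {J : Type*} (i : J) : Xv i ≠ (1 : LaurentRing J) := by
  rw [Xv, AddMonoidAlgebra.one_def]
  intro h
  rcases AddMonoidAlgebra.single_inj.1 h with ⟨h1, _⟩ | ⟨h1, _⟩
  · exact one_ne_zero (Finsupp.single_eq_zero.1 h1)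
  · exact one_ne_zero h1

lemma Xv_ne_zero {J : Type*} (i : J) : Xv i ≠ (0 : LaurentRing J) := by
  rw [Xv]
  exact fun h => one_ne_zero (AddMonoidAlgebra.single_eq_zero.1 h)

lemma Xv_mul_Xinv {J : Type*} (i : J) : Xv i * Xinv i = 1 := by
  rw [Xv, Xinv, AddMonoidAlgebra.single_mul_single, AddMonoidAlgebra.one_def,
    ← Finsupp.single_add]
  norm_num

lemma single_int_eq {J : Type*} (i : J) (n : ℤ) :
    (AddMonoidAlgebra.single (Finsupp.single i n) 1 : LaurentRing J)
      = Xv i ^ n.toNat * Xinv i ^ (-n).toNat := by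
  rw [Xv, Xinv, AddMonoidAlgebra.single_pow, AddMonoidAlgebra.single_pow,
    AddMonoidAlgebra.single_mul_single, one_pow, one_pow, one_mul,
    Finsupp.smul_single, Finsupp.smul_single, ← Finsupp.single_add]
  congr 2
  simp only [nsmul_eq_mul, mul_one, mul_neg]
  omega

/-- Every bijective cluster morphism `φ : L(t) → L(t')` decomposes as
`φ = 𝔉_E ∘ 𝔖_σ`: the induced vertex map `σ` is a bijection `I → I'` and `φ` is the
composite of the similarity morphism `𝔖_σ` followed by the freezing morphism `𝔉_E`
for `E = I'_uf ∖ φ(I_uf)`. -/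
theorem statement12 {I I' : Type*} [Finite I] [Finite I'] (t : Seed I) (t' : Seed I')
    (c : ClusterMorphism t t') (hbij : Function.Bijective c.hom) :
    Function.Bijective c.vmap ∧
      c.hom = (FreezeHom (I := I') (t'.uf \ c.vmap '' t.uf)).comp (SimHom c.vmap) := by
  classical
  have hne : ∀ i : I, c.hom (Xv i) ≠ 1 := by
    intro i h
    exact Xv_ne_one i (hbij.1 (h.trans (map_one c.hom).symm))
  have hX : ∀ i : I, c.hom (Xv i) = Xv (c.vmap i) := fun i => (c.hx i).resolve_left (hne i)
  have hXinv : ∀ i : I, c.hom (Xinv i) = Xinv (c.vmap i) := by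
    intro i
    have h1 : Xv (c.vmap i) * c.hom (Xinv i) = 1 := by
      rw [← hX, ← map_mul, Xv_mul_Xinv, map_one]
    have h2 : Xv (c.vmap i) * Xinv (c.vmap i) = 1 := Xv_mul_Xinv _
    exact mul_left_cancel₀ (Xv_ne_zero _) (h1.trans h2.symm)
  have hsingle : ∀ (i : I) (n : ℤ),
      c.hom (AddMonoidAlgebra.single (Finsupp.single i n) 1)
        = AddMonoidAlgebra.single (Finsupp.single (c.vmap i) n) 1 := by
    intro i n
    rw [single_int_eq, map_mul, map_pow, map_pow, hX, hXinv, ← single_int_eq]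
  have key : ∀ m : I →₀ ℤ,
      c.hom (AddMonoidAlgebra.single m 1)
        = AddMonoidAlgebra.single (Finsupp.mapDomain c.vmap m) 1 := by
    intro m
    induction m using Finsupp.induction with
    | zero =>
      rw [← AddMonoidAlgebra.one_def, map_one, Finsupp.mapDomain_zero,
        ← AddMonoidAlgebra.one_def]
    | single_add a b f _ _ ih =>
      have hsplit : (AddMonoidAlgebra.single (Finsupp.single a b + f) 1 : LaurentRing I)
          = AddMonoidAlgebra.single (Finsupp.single a b) 1 * AddMonoidAlgebra.single f 1 := by
        rw [AddMonoidAlgebra.single_mul_single, one_mul]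
      rw [hsplit, map_mul, hsingle, ih, AddMonoidAlgebra.single_mul_single, one_mul,
        Finsupp.mapDomain_add, Finsupp.mapDomain_single]
  have heq : c.hom = SimHom c.vmap := by
    apply AddMonoidAlgebra.ringHom_ext
    · intro q
      have h1 : c.hom.comp (algebraMap ℚ (LaurentRing I)) = algebraMap ℚ (LaurentRing I') :=
        Subsingleton.elim _ _
      have h2 : c.hom (AddMonoidAlgebra.single 0 q) = AddMonoidAlgebra.single 0 q := by
        have := RingHom.congr_fun h1 q
        simpa using this
      rw [h2]
      show _ = AddMonoidAlgebra.mapDomain _ (AddMonoidAlgebra.single (0 : I →₀ ℤ) q)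
      rw [AddMonoidAlgebra.mapDomain_single]
      simp
    · intro m
      rw [key]
      show _ = AddMonoidAlgebra.mapDomain _ (AddMonoidAlgebra.single m 1)
      rw [AddMonoidAlgebra.mapDomain_single]
      simp
  have hinj : Function.Injective c.vmap := fun i j h => c.vinj i j (hne i) (hne j) h
  have hsurj : Function.Surjective c.vmap := by
    intro j'
    by_contra hj'
    push_neg at hj'
    obtain ⟨p, hp⟩ := hbij.2 (Xv j')
    rw [heq] at hp
    have hrange : (Finsupp.single j' (1 : ℤ)) ∉
        Set.range ⇑(Finsupp.mapDomain.addMonoidHom (M := ℤ) c.vmap) := by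
      rintro ⟨m, hm⟩
      rw [Finsupp.mapDomain.addMonoidHom_apply] at hm
      have h0 : Finsupp.mapDomain c.vmap m j' = 0 :=
        Finsupp.mapDomain_notin_range m j' (by rintro ⟨i, rfl⟩; exact hj' i rfl)
      rw [hm, Finsupp.single_eq_same] at h0
      exact one_ne_zero h0
    have h0 : (SimHom c.vmap p).coeff (Finsupp.single j' (1 : ℤ)) = 0 := by
      show (Finsupp.mapDomain (⇑(Finsupp.mapDomain.addMonoidHom (M := ℤ) c.vmap)) p.coeff)
          (Finsupp.single j' (1 : ℤ)) = 0
      exact Finsupp.mapDomain_notin_range p.coeff _ hrange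
    rw [hp] at h0
    have h1 : (Xv j' : LaurentRing I').coeff (Finsupp.single j' (1 : ℤ)) = 1 := by
      rw [Xv, AddMonoidAlgebra.coeff_single]
      exact Finsupp.single_eq_same
    rw [h1] at h0
    exact one_ne_zero h0
  exact ⟨⟨hinj, hsurj⟩, by rw [heq]; rfl⟩

end
end

section
/- Let t' = ({y_j}_{j∈I'}, I'_uf, B') be a seed and H ⊆ I' a subset such that b'_{jk} = 0 whenever exactly one of j ∈ I', k ∈ I'_uf lies in H. Set J = I'∖H and t'_J = ({y_j}_{j∈J}, I'_uf∖H, B' restricted to J × (I'_uf∖H)). Then the ring homomorphism 𝔈_H : L(t'_J) → L(t') determined by y_j ↦ y_j for j ∈ J is an injective cluster morphism from t'_J to t'. -/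
open scoped BigOperators

noncomputable section

-- auxiliary lemmas

lemma reindexHom_single {I I' : Type*} (f : I → I') (a : I →₀ ℤ) (r : ℚ) :
    reindexHom f (AddMonoidAlgebra.single a r) =
      AddMonoidAlgebra.single (Finsupp.mapDomain f a) r := by
  simp [reindexHom, AddMonoidAlgebra.mapDomainRingHom, Finsupp.mapDomain.addMonoidHom,
    AddMonoidAlgebra.mapDomain_single]

lemma reindexHom_Xv {I I' : Type*} (f : I → I') (i : I) :
    reindexHom f (Xv i) = Xv (f i) := by
  rw [Xv, reindexHom_single, Finsupp.mapDomain_single]; rfl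

lemma reindexHom_Xinv {I I' : Type*} (f : I → I') (i : I) :
    reindexHom f (Xinv i) = Xinv (f i) := by
  rw [Xinv, reindexHom_single, Finsupp.mapDomain_single]; rfl

lemma reindexHom_injective {I I' : Type*} {f : I → I'} (hf : Function.Injective f) :
    Function.Injective (reindexHom (I := I) (I' := I') f) := by
  have h1 : Function.Injective (Finsupp.mapDomain (α := I) (β := I') (M := ℤ) f) :=
    Finsupp.mapDomain_injective hf
  exact AddMonoidAlgebra.mapDomain_injective h1


/-- Let `t'` be a seed on `I'` and `H ⊆ I'` with `b'_{jk} = 0` whenever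
exactly one of `j ∈ I'`, `k ∈ I'_uf` lies in `H`.  With `J = I' ∖ H`, the ring
homomorphism `𝔈_H : L(t'_J) → L(t')`, `y_j ↦ y_j`, is an injective cluster morphism from
the seed `t'_J = ({y_j}_{j∈J}, I'_uf ∖ H, B' restricted to J × (I'_uf ∖ H))` to `t'`. -/
theorem statement16 {I' : Type*} [Finite I'] (t' : Seed I') (H : Set I')
    (hH : ∀ j : I', ∀ k ∈ t'.uf, Xor' (j ∈ H) (k ∈ H) → t'.B j k = 0) :
    ∃ c : ClusterMorphism
        (Seed.mk {j : ↥{j : I' | j ∉ H} | (j : I') ∈ t'.uf} (fun a b => t'.B a b)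
          (fun i hi j hj => t'.skew i hi j hj))
        t',
      c.hom = IncHom {j : I' | j ∉ H} ∧ Function.Injective c.hom := by
  classical
  set s : Set I' := {j : I' | j ∉ H}
  have hXv : ∀ j : ↥s, IncHom s (Xv j) = Xv (j : I') := fun j => reindexHom_Xv _ j
  have hne : ∀ j : ↥s, IncHom s (Xv j) ≠ 1 := by
    intro j h
    rw [hXv] at h
    rw [Xv, AddMonoidAlgebra.one_def] at h
    have h2 : Finsupp.single ((j : I') : I') (1 : ℤ) = (0 : I' →₀ ℤ) :=
      AddMonoidAlgebra.single_left_injective (one_ne_zero) h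
    rw [Finsupp.single_eq_zero] at h2
    exact one_ne_zero h2
  have hfin : Finite ↥s := Subtype.finite
  -- key finprod identity
  have hmap : ∀ (g : ↥s → LaurentRing ↥s),
      IncHom s (∏ᶠ j, g j) = ∏ᶠ j, IncHom s (g j) := fun g =>
    MonoidHom.map_finprod (IncHom s).toMonoidHom (Set.toFinite _)
  have key : ∀ (e : I' → ℤ), (∀ j ∈ H, e j = 0) →
      IncHom s (∏ᶠ j : ↥s, Xv j ^ (max (e j) 0).toNat)
        = ∏ᶠ j : I', Xv j ^ (max (e j) 0).toNat := by
    intro e he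
    rw [hmap]
    simp only [map_pow, hXv]
    have h1 : (∏ᶠ j : ↥s, Xv (j : I') ^ (max (e (j : I')) 0).toNat)
        = ∏ᶠ j ∈ s, Xv j ^ (max (e j) 0).toNat :=
      finprod_set_coe_eq_finprod_mem (f := fun j => Xv j ^ (max (e j) 0).toNat) s
    rw [h1]
    conv_rhs => rw [← finprod_mem_univ]
    apply finprod_mem_inter_mulSupport_eq'
    intro j hj
    simp only [Set.mem_univ, iff_true, s, Set.mem_setOf_eq]
    intro hjH
    apply hj
    rw [he j hjH]
    simp
  refine ⟨⟨IncHom s, Subtype.val, fun i => Or.inr (hXv i),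
    fun i i' _ _ h => Subtype.ext h,
    fun i hi _ => hi,
    ?_,
    fun i hi j hj _ _ => by dsimp; exact mul_self_nonneg _⟩, rfl, reindexHom_injective Subtype.val_injective⟩
  · intro i hi _
    dsimp only
    rw [exchVar, exchVar, map_mul, map_add]
    have hXinv : IncHom s (Xinv i) = Xinv (i : I') := reindexHom_Xinv _ i
    rw [hXinv]
    have hiH : (i : I') ∉ H := i.2
    have h1 := key (fun j => t'.B j (i : I')) (fun j hj => hH j i hi (Or.inl ⟨hj, hiH⟩))
    have h2 := key (fun j => -(t'.B j (i : I'))) (fun j hj => by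
      show -(t'.B j (i : I')) = 0
      rw [hH j i hi (Or.inl ⟨hj, hiH⟩)]; ring)
    rw [← h1, ← h2]

end
end
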